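/- arXiv:1508.03200 — 4 statements merged into one kernel-verified Lean document; each statement's English description precedes it below -/
import Mathlib

section
/- (Zhukovskii stability test for the Hill equation.) Let T > 0, let n ∈ ℕ, and let q : ℝ → ℝ be continuous and T-periodic with n²π²/T² < q(t) < (n+1)²π²/T² for all t ∈ ℝ. Then the Hill equation z'' + q(t)z = 0 is strongly stable; in particular, every C² solution z : ℝ → ℝ of z''(t) + q(t)z(t) = 0 is bounded on ℝ. -/
open Set

namespace Zhuk

/-- A solution package for `z'' + q z = 0`. -/
structure Sol (q : ℝ → ℝ) (z : ℝ → ℝ) : Prop where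
  smooth : ContDiff ℝ 2 z
  eqn : ∀ t, deriv (deriv z) t + q t * z t = 0

variable {q z : ℝ → ℝ}

lemma Sol.diff (h : Sol q z) : Differentiable ℝ z :=
  h.smooth.differentiable (by norm_num)

lemma Sol.diff' (h : Sol q z) : Differentiable ℝ (deriv z) := by
  have h2 : ContDiff ℝ ((1:ℕ) + 1) z := by norm_num at h ⊢; exact h.smooth
  exact (contDiff_succ_iff_deriv.mp h2).2.2.differentiable (by norm_num)

lemma Sol.cont (h : Sol q z) : Continuous z := h.diff.continuous
lemma Sol.cont' (h : Sol q z) : Continuous (deriv z) := h.diff'.continuous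

lemma Sol.hasDeriv (h : Sol q z) (t : ℝ) : HasDerivAt z (deriv z t) t :=
  (h.diff t).hasDerivAt

lemma Sol.hasDeriv2 (h : Sol q z) (t : ℝ) :
    HasDerivAt (deriv z) (-(q t * z t)) t := by
  have := (h.diff' t).hasDerivAt
  have e : deriv (deriv z) t = -(q t * z t) := by linarith [h.eqn t]
  rwa [e] at this

lemma Sol.neg (h : Sol q z) : Sol q (fun t => -z t) := by
  constructor
  · exact h.smooth.neg
  · intro t
    have e1 : deriv (fun t => -z t) = fun t => -deriv z t := by
      funext s; exact deriv.neg
    rw [e1]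
    have e2 : deriv (fun t => -deriv z t) t = -deriv (deriv z) t := deriv.neg
    rw [e2]
    have := h.eqn t
    ring_nf
    ring_nf at this
    linarith

lemma Sol.shift (h : Sol q z) (c : ℝ) (hqc : ∀ t, q (t + c) = q t) :
    Sol q (fun t => z (t + c)) := by
  constructor
  · exact h.smooth.comp ((contDiff_id.add contDiff_const))
  · intro t
    have e1 : deriv (fun t => z (t + c)) = fun t => deriv z (t + c) := by
      funext s; exact deriv_comp_add_const z c s
    rw [e1]
    have e2 : deriv (fun t => deriv z (t + c)) t = deriv (deriv z) (t + c) :=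
      deriv_comp_add_const (deriv z) c t
    rw [e2]
    have := h.eqn (t + c)
    rw [hqc t] at this
    exact this

lemma Sol.combo (hz : Sol q z) {w : ℝ → ℝ} (hw : Sol q w) (a b : ℝ) :
    Sol q (fun t => a * z t + b * w t) := by
  constructor
  · exact (hz.smooth.const_smul a).add (hw.smooth.const_smul b)
  · intro t
    have e1 : deriv (fun t => a * z t + b * w t) = fun t => a * deriv z t + b * deriv w t := by
      funext s
      rw [deriv_fun_add ((hz.diff s).const_mul a) ((hw.diff s).const_mul b),
        deriv_const_mul a (hz.diff s), deriv_const_mul b (hw.diff s)]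
    rw [e1]
    rw [deriv_fun_add ((hz.diff' t).const_mul a) ((hw.diff' t).const_mul b),
      deriv_const_mul a (hz.diff' t), deriv_const_mul b (hw.diff' t)]
    have h1 := hz.eqn t
    have h2 := hw.eqn t
    linear_combination a * h1 + b * h2

/-- A solution vanishing to first order at a point is identically zero
(elementary energy/Gronwall argument). -/
lemma Sol.zero_of (hu : Sol q z) (M : ℝ) (hM : ∀ t, |q t| ≤ M) (t₀ : ℝ)
    (h0 : z t₀ = 0) (h0' : deriv z t₀ = 0) : ∀ t, z t = 0 := by
  set K := 1 + M with hK
  set E : ℝ → ℝ := fun t => z t * z t + deriv z t * deriv z t with hEdef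
  set D : ℝ → ℝ := fun t => 2 * z t * deriv z t * (1 - q t) with hDdef
  have hE : ∀ t, HasDerivAt E (D t) t := by
    intro t
    have h1 := (hu.hasDeriv t).mul (hu.hasDeriv t)
    have h2 := (hu.hasDeriv2 t).mul (hu.hasDeriv2 t)
    have h3 := h1.add h2
    refine h3.congr_deriv ?_
    simp only [hDdef]
    ring
  have hEnn : ∀ t, 0 ≤ E t := by
    intro t; simp only [hEdef]; nlinarith [sq_nonneg (z t), sq_nonneg (deriv z t)]
  have hE0 : E t₀ = 0 := by simp [hEdef, h0, h0']
  have hbound : ∀ t, |D t| ≤ K * E t := by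
    intro t
    have h2ab : |2 * z t * deriv z t| ≤ E t := by
      rw [abs_le]
      simp only [hEdef]
      constructor <;>
        nlinarith [sq_nonneg (z t - deriv z t), sq_nonneg (z t + deriv z t)]
    have hq := hM t
    have hc : |1 - q t| ≤ K := by
      rw [abs_le] at hq ⊢
      constructor <;> simp only [hK] <;> linarith
    have : |D t| = |2 * z t * deriv z t| * |1 - q t| := by
      simp only [hDdef]; rw [← abs_mul]
    rw [this]
    calc |2 * z t * deriv z t| * |1 - q t| ≤ E t * K :=
          mul_le_mul h2ab hc (abs_nonneg _) (le_trans (abs_nonneg _) h2ab)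
      _ = K * E t := mul_comm _ _
  have hEzero : ∀ t, E t = 0 := by
    intro t
    have key : ∀ s : ℝ, E s ≤ 0 := by
      intro s
      rcases le_total t₀ s with hs | hs
      · -- forward : g = E * exp(-(K*t)) antitone
        set g : ℝ → ℝ := fun t => E t * Real.exp (-(K * t)) with hg
        have hgD : ∀ t, HasDerivAt g ((D t - K * E t) * Real.exp (-(K * t))) t := by
          intro t
          have hexp : HasDerivAt (fun t : ℝ => Real.exp (-(K * t)))
              (Real.exp (-(K * t)) * (-K)) t :=
            HasDerivAt.exp (by simpa using ((hasDerivAt_id t).const_mul (-K)))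
          have := (hE t).mul hexp
          refine this.congr_deriv ?_
          ring
        have hanti : Antitone g := by
          apply antitone_of_deriv_nonpos
          · exact fun t => (hgD t).differentiableAt
          · intro t
            rw [(hgD t).deriv]
            have h1 : D t - K * E t ≤ 0 := by
              have := hbound t
              have := le_abs_self (D t)
              linarith
            have h2 : (0:ℝ) < Real.exp (-(K * t)) := Real.exp_pos _
            exact mul_nonpos_of_nonpos_of_nonneg h1 h2.le
        have : g s ≤ g t₀ := hanti hs
        rw [hg] at this
        simp only [hE0, zero_mul] at this
        have h2 : (0:ℝ) < Real.exp (-(K * s)) := Real.exp_pos _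
        nlinarith
      · -- backward : g = E * exp(K*t) monotone
        set g : ℝ → ℝ := fun t => E t * Real.exp (K * t) with hg
        have hgD : ∀ t, HasDerivAt g ((D t + K * E t) * Real.exp (K * t)) t := by
          intro t
          have hexp : HasDerivAt (fun t : ℝ => Real.exp (K * t))
              (Real.exp (K * t) * K) t :=
            HasDerivAt.exp (by simpa using ((hasDerivAt_id t).const_mul K))
          have := (hE t).mul hexp
          refine this.congr_deriv ?_
          ring
        have hmono : Monotone g := by
          apply monotone_of_deriv_nonneg
          · exact fun t => (hgD t).differentiableAt
          · intro t
            rw [(hgD t).deriv]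
            have h1 : 0 ≤ D t + K * E t := by
              have := hbound t
              have := neg_abs_le (D t)
              linarith
            have h2 : (0:ℝ) < Real.exp (K * t) := Real.exp_pos _
            positivity
        have : g s ≤ g t₀ := hmono hs
        rw [hg] at this
        simp only [hE0, zero_mul] at this
        have h2 : (0:ℝ) < Real.exp (K * s) := Real.exp_pos _
        nlinarith
    have := key t
    have := hEnn t
    linarith
  intro t
  have := hEzero t
  simp only [hEdef] at this
  nlinarith [sq_nonneg (z t), sq_nonneg (deriv z t)]

/-- Uniqueness of solutions. -/
lemma Sol.unique {z₁ z₂ : ℝ → ℝ} (h₁ : Sol q z₁) (h₂ : Sol q z₂)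
    (M : ℝ) (hM : ∀ t, |q t| ≤ M) (t₀ : ℝ)
    (hval : z₁ t₀ = z₂ t₀) (hder : deriv z₁ t₀ = deriv z₂ t₀) :
    ∀ t, z₁ t = z₂ t := by
  have hu : Sol q (fun t => (1:ℝ) * z₁ t + (-1) * z₂ t) := h₁.combo h₂ 1 (-1)
  have hder' : ∀ t, deriv (fun t => (1:ℝ) * z₁ t + (-1) * z₂ t) t
      = deriv z₁ t - deriv z₂ t := by
    intro t
    rw [deriv_fun_add ((h₁.diff t).const_mul 1) ((h₂.diff t).const_mul (-1)),
      deriv_const_mul 1 (h₁.diff t), deriv_const_mul (-1) (h₂.diff t)]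
    ring
  have h0 : (fun t => (1:ℝ) * z₁ t + (-1) * z₂ t) t₀ = 0 := by simp [hval]
  have h0' : deriv (fun t => (1:ℝ) * z₁ t + (-1) * z₂ t) t₀ = 0 := by
    rw [hder' t₀]; rw [hder]; ring
  have := hu.zero_of M hM t₀ h0 h0'
  intro t
  have ht := this t
  linarith

/-- Derivative of the Wronskian of a solution with `sin (ω (· - c))`. -/
lemma Sol.wronskian_deriv (hy : Sol q z) (ω c t : ℝ) :
    HasDerivAt (fun s => z s * (ω * Real.cos (ω * (s - c)))
        - deriv z s * Real.sin (ω * (s - c)))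
      ((q t - ω ^ 2) * z t * Real.sin (ω * (t - c))) t := by
  have hid : HasDerivAt (fun s : ℝ => ω * (s - c)) ω t := by
    simpa using (((hasDerivAt_id t).sub_const c).const_mul ω)
  have hsin : HasDerivAt (fun s => Real.sin (ω * (s - c)))
      (Real.cos (ω * (t - c)) * ω) t := hid.sin
  have hcos : HasDerivAt (fun s => ω * Real.cos (ω * (s - c)))
      (ω * (-Real.sin (ω * (t - c)) * ω)) t := hid.cos.const_mul ω
  have h1 := (hy.hasDeriv t).mul hcos
  have h2 := (hy.hasDeriv2 t).mul hsin
  have h3 := h1.sub h2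
  refine h3.congr_deriv ?_
  ring

/-- Sign constancy of a nonvanishing continuous function on an interval `s`
which is order-connected enough: stated for `uIcc`-closed sets. -/
lemma pos_or_neg_on {f : ℝ → ℝ} (hf : Continuous f) {s : Set ℝ}
    (hcl : ∀ a ∈ s, ∀ b ∈ s, uIcc a b ⊆ s) (hne : ∀ t ∈ s, f t ≠ 0)
    {m : ℝ} (hm : m ∈ s) (hfm : 0 < f m) : ∀ t ∈ s, 0 < f t := by
  intro t ht
  by_contra hle
  push_neg at hle
  have h0 : (0:ℝ) ∈ uIcc (f t) (f m) := Set.mem_uIcc.2 (Or.inl ⟨hle, hfm.le⟩)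
  obtain ⟨x, hx, hfx⟩ := intermediate_value_uIcc (hf.continuousOn (s := uIcc t m)) h0
  exact hne x (hcl t ht m hm hx) hfx

lemma Ioo_uIcc_closed {c d : ℝ} : ∀ a ∈ Ioo c d, ∀ b ∈ Ioo c d, uIcc a b ⊆ Ioo c d := by
  intro a ha b hb x hx
  rw [Set.mem_uIcc] at hx
  rcases hx with ⟨h1, h2⟩ | ⟨h1, h2⟩
  · exact ⟨lt_of_lt_of_le ha.1 h1, lt_of_le_of_lt h2 hb.2⟩
  · exact ⟨lt_of_lt_of_le hb.1 h1, lt_of_le_of_lt h2 ha.2⟩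

lemma Icc_uIcc_closed {c d : ℝ} : ∀ a ∈ Icc c d, ∀ b ∈ Icc c d, uIcc a b ⊆ Icc c d := by
  intro a ha b hb x hx
  rw [Set.mem_uIcc] at hx
  rcases hx with ⟨h1, h2⟩ | ⟨h1, h2⟩
  · exact ⟨le_trans ha.1 h1, le_trans h2 hb.2⟩
  · exact ⟨le_trans hb.1 h1, le_trans h2 ha.2⟩

/-- If `q ≥ ω² > 0` and `y > 0` on a closed interval of length `π/ω`, contradiction. -/
lemma Sol.not_pos_on (hy : Sol q z) {ω : ℝ} (hω : 0 < ω)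
    (hq : ∀ t, ω ^ 2 ≤ q t) (c : ℝ)
    (hpos : ∀ t ∈ Icc c (c + Real.pi / ω), 0 < z t) : False := by
  set L := Real.pi / ω with hL
  have hL0 : 0 < L := div_pos Real.pi_pos hω
  set W : ℝ → ℝ := fun s => z s * (ω * Real.cos (ω * (s - c)))
      - deriv z s * Real.sin (ω * (s - c)) with hWdef
  have hmono : MonotoneOn W (Icc c (c + L)) := by
    apply monotoneOn_of_deriv_nonneg (convex_Icc _ _)
    · apply Continuous.continuousOn
      apply Continuous.sub
      · exact hy.cont.mul (by fun_prop)
      · exact hy.cont'.mul (by fun_prop)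
    · intro t ht
      exact (hy.wronskian_deriv ω c t).differentiableAt.differentiableWithinAt
    · intro t ht
      rw [interior_Icc] at ht
      rw [(hy.wronskian_deriv ω c t).deriv]
      have h1 : 0 ≤ q t - ω ^ 2 := by linarith [hq t]
      have h2 : 0 < z t := hpos t ⟨ht.1.le, ht.2.le⟩
      have h3 : 0 ≤ Real.sin (ω * (t - c)) := by
        apply Real.sin_nonneg_of_nonneg_of_le_pi
        · have : 0 < t - c := by linarith [ht.1]
          positivity
        · have h4 : t - c < L := by linarith [ht.2]
          have : ω * (t - c) < ω * L := by exact (mul_lt_mul_iff_right₀ hω).2 h4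
          rw [hL] at this
          rw [mul_div_cancel₀ Real.pi (ne_of_gt hω)] at this
          linarith
      positivity
  have hcempty : c ∈ Icc c (c + L) := by constructor <;> linarith
  have heempty : c + L ∈ Icc c (c + L) := by constructor <;> linarith
  have hle := hmono hcempty heempty (by linarith)
  have hWc : W c = ω * z c := by
    simp only [hWdef, sub_self, mul_zero, Real.cos_zero, Real.sin_zero]
    ring
  have hWe : W (c + L) = -(ω * z (c + L)) := by
    have harg : ω * (c + L - c) = Real.pi := by
      rw [hL]
      have : c + Real.pi / ω - c = Real.pi / ω := by ring
      rw [this, mul_div_cancel₀ Real.pi (ne_of_gt hω)]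
    simp only [hWdef, harg, Real.cos_pi, Real.sin_pi]
    ring
  rw [hWc, hWe] at hle
  have h1 : 0 < z c := hpos c hcempty
  have h2 : 0 < z (c + L) := hpos (c + L) heempty
  nlinarith

/-- Existence of a zero of any solution on every interval of length `π/ω`, when `q ≥ ω²`. -/
lemma Sol.exists_zero (hy : Sol q z) {ω : ℝ} (hω : 0 < ω)
    (hq : ∀ t, ω ^ 2 ≤ q t) (c : ℝ) :
    ∃ t ∈ Icc c (c + Real.pi / ω), z t = 0 := by
  by_contra h
  push_neg at h
  have hL0 : 0 < Real.pi / ω := div_pos Real.pi_pos hω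
  have hcmem : c ∈ Icc c (c + Real.pi / ω) := by constructor <;> linarith
  rcases lt_or_gt_of_ne (h c hcmem) with hneg | hpos
  · -- z c < 0 : apply to -z
    have : ∀ t ∈ Icc c (c + Real.pi / ω), 0 < (fun t => -z t) t :=
      pos_or_neg_on (hy.cont.neg) Icc_uIcc_closed
        (fun t ht hz => h t ht (by simpa using neg_eq_zero.mp hz))
        hcmem (by simpa using hneg)
    exact hy.neg.not_pos_on hω hq c this
  · have : ∀ t ∈ Icc c (c + Real.pi / ω), 0 < z t :=
      pos_or_neg_on hy.cont Icc_uIcc_closed h hcmem hpos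
    exact hy.not_pos_on hω hq c this

open Filter Topology in
/-- At a right-endpoint zero of a function positive just to the left,
the derivative is nonpositive. -/
lemma deriv_nonpos_right {f : ℝ → ℝ} (hf : Differentiable ℝ f) {c d : ℝ} (hcd : c < d)
    (hfd : f d = 0) (hpos : ∀ t ∈ Ioo c d, 0 < f t) : deriv f d ≤ 0 := by
  have hder := hasDerivAt_iff_tendsto_slope.mp (hf d).hasDerivAt
  have hmono : 𝓝[<] d ≤ 𝓝[≠] d :=
    nhdsWithin_mono d fun x (hx : x < d) => ne_of_lt hx
  have htend : Tendsto (slope f d) (𝓝[<] d) (𝓝 (deriv f d)) := hder.mono_left hmono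
  have hev : ∀ᶠ t in 𝓝[<] d, slope f d t ≤ 0 := by
    filter_upwards [Ioo_mem_nhdsLT_of_mem (⟨hcd, le_refl d⟩ : d ∈ Ioc c d)] with t ht
    rw [slope_def_field, hfd]
    have h1 : 0 < f t := hpos t ht
    have h2 : t - d < 0 := by linarith [ht.2]
    have : (f t - 0) / (t - d) < 0 := div_neg_of_pos_of_neg (by linarith) h2
    linarith
  exact le_of_tendsto htend hev

/-- Sturm: with `q > ω²`, consecutive zeros are less than `π/ω` apart (positive case). -/
lemma Sol.gap_lt_aux (hy : Sol q z) {ω c d : ℝ} (hω : 0 < ω) (hq : ∀ t, ω ^ 2 < q t)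
    (hcd : c < d) (hc : z c = 0) (hd : z d = 0)
    (hpos : ∀ t ∈ Ioo c d, 0 < z t) : d - c < Real.pi / ω := by
  by_contra hcon
  push_neg at hcon
  set e := c + Real.pi / ω with he
  have hπ : 0 < Real.pi / ω := div_pos Real.pi_pos hω
  have he_le : e ≤ d := by simp only [he]; linarith
  have hce : c < e := by simp only [he]; linarith
  set W : ℝ → ℝ := fun s => z s * (ω * Real.cos (ω * (s - c)))
      - deriv z s * Real.sin (ω * (s - c)) with hWdef
  have hWcont : Continuous W := by
    apply Continuous.sub
    · exact hy.cont.mul (by fun_prop)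
    · exact hy.cont'.mul (by fun_prop)
  have hmono : StrictMonoOn W (Icc c e) := by
    apply strictMonoOn_of_deriv_pos (convex_Icc _ _) hWcont.continuousOn
    intro t ht
    rw [interior_Icc] at ht
    rw [(hy.wronskian_deriv ω c t).deriv]
    have h1 : 0 < q t - ω ^ 2 := by linarith [hq t]
    have h2 : 0 < z t := hpos t ⟨ht.1, lt_of_lt_of_le ht.2 he_le⟩
    have h3 : 0 < Real.sin (ω * (t - c)) := by
      apply Real.sin_pos_of_pos_of_lt_pi
      · have : 0 < t - c := by linarith [ht.1]
        positivity
      · have h4 : t - c < Real.pi / ω := by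
          have := ht.2; simp only [he] at this; linarith
        have : ω * (t - c) < ω * (Real.pi / ω) := (mul_lt_mul_iff_right₀ hω).2 h4
        rwa [mul_div_cancel₀ Real.pi (ne_of_gt hω)] at this
    positivity
  have hlt : W c < W e :=
    hmono ⟨le_refl c, hce.le⟩ ⟨hce.le, le_refl e⟩ hce
  have hWc : W c = 0 := by
    simp only [hWdef, sub_self, mul_zero, Real.cos_zero, Real.sin_zero, hc]
    ring
  have hWe : W e = -(ω * z e) := by
    have harg : ω * (e - c) = Real.pi := by
      have : e - c = Real.pi / ω := by simp only [he]; ring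
      rw [this, mul_div_cancel₀ Real.pi (ne_of_gt hω)]
    simp only [hWdef, harg, Real.cos_pi, Real.sin_pi]
    ring
  have hze : 0 ≤ z e := by
    rcases eq_or_lt_of_le he_le with heq | hlt'
    · rw [heq, hd]
    · exact (hpos e ⟨hce, hlt'⟩).le
  rw [hWc, hWe] at hlt
  nlinarith

/-- Sturm: with `q > ω²`, consecutive zeros are less than `π/ω` apart. -/
lemma Sol.gap_lt (hy : Sol q z) {ω c d : ℝ} (hω : 0 < ω) (hq : ∀ t, ω ^ 2 < q t)
    (hcd : c < d) (hc : z c = 0) (hd : z d = 0)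
    (hno : ∀ t ∈ Ioo c d, z t ≠ 0) : d - c < Real.pi / ω := by
  have hm : (c + d) / 2 ∈ Ioo c d := ⟨by linarith, by linarith⟩
  rcases lt_or_gt_of_ne (hno _ hm) with hneg | hpos
  · have hpos' : ∀ t ∈ Ioo c d, 0 < (fun t => -z t) t :=
      pos_or_neg_on hy.cont.neg Ioo_uIcc_closed
        (fun t ht h0 => hno t ht (by simpa using neg_eq_zero.mp h0)) hm
        (by simpa using hneg)
    exact hy.neg.gap_lt_aux hω hq hcd (by simpa using hc) (by simpa using hd) hpos'
  · exact hy.gap_lt_aux hω hq hcd hc hd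
      (pos_or_neg_on hy.cont Ioo_uIcc_closed hno hm hpos)

/-- Sturm: with `q < Ω²`, consecutive zeros are more than `π/Ω` apart (positive case). -/
lemma Sol.gap_gt_aux (hy : Sol q z) {Ω c d : ℝ} (hΩ : 0 < Ω) (hq : ∀ t, q t < Ω ^ 2)
    (hcd : c < d) (hc : z c = 0) (hd : z d = 0)
    (hpos : ∀ t ∈ Ioo c d, 0 < z t) : Real.pi / Ω < d - c := by
  by_contra hcon
  push_neg at hcon
  set W : ℝ → ℝ := fun s => z s * (Ω * Real.cos (Ω * (s - c)))
      - deriv z s * Real.sin (Ω * (s - c)) with hWdef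
  have hWcont : Continuous W := by
    apply Continuous.sub
    · exact hy.cont.mul (by fun_prop)
    · exact hy.cont'.mul (by fun_prop)
  have hanti : StrictAntiOn W (Icc c d) := by
    apply strictAntiOn_of_deriv_neg (convex_Icc _ _) hWcont.continuousOn
    intro t ht
    rw [interior_Icc] at ht
    rw [(hy.wronskian_deriv Ω c t).deriv]
    have h1 : q t - Ω ^ 2 < 0 := by linarith [hq t]
    have h2 : 0 < z t := hpos t ht
    have h3 : 0 < Real.sin (Ω * (t - c)) := by
      apply Real.sin_pos_of_pos_of_lt_pi
      · have : 0 < t - c := by linarith [ht.1]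
        positivity
      · have h4 : t - c < Real.pi / Ω := by
          have := ht.2; linarith
        have : Ω * (t - c) < Ω * (Real.pi / Ω) := (mul_lt_mul_iff_right₀ hΩ).2 h4
        rwa [mul_div_cancel₀ Real.pi (ne_of_gt hΩ)] at this
    rw [mul_assoc]
    exact mul_neg_of_neg_of_pos h1 (mul_pos h2 h3)
  have hlt : W d < W c :=
    hanti ⟨le_refl c, hcd.le⟩ ⟨hcd.le, le_refl d⟩ hcd
  have hWc : W c = 0 := by
    simp only [hWdef, sub_self, mul_zero, Real.cos_zero, Real.sin_zero, hc]
    ring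
  have hWd : W d = -(deriv z d * Real.sin (Ω * (d - c))) := by
    simp only [hWdef, hd]
    ring
  have hderiv : deriv z d ≤ 0 := deriv_nonpos_right hy.diff hcd hd hpos
  have hsin : 0 ≤ Real.sin (Ω * (d - c)) := by
    apply Real.sin_nonneg_of_nonneg_of_le_pi
    · have : 0 < d - c := by linarith
      positivity
    · have : Ω * (d - c) ≤ Ω * (Real.pi / Ω) := by
        apply mul_le_mul_of_nonneg_left hcon hΩ.le
      rwa [mul_div_cancel₀ Real.pi (ne_of_gt hΩ)] at this
  rw [hWc, hWd] at hlt
  nlinarith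

/-- Sturm: with `q < Ω²`, zeros with no zero in between are more than `π/Ω` apart. -/
lemma Sol.gap_gt (hy : Sol q z) {Ω c d : ℝ} (hΩ : 0 < Ω) (hq : ∀ t, q t < Ω ^ 2)
    (hcd : c < d) (hc : z c = 0) (hd : z d = 0)
    (hno : ∀ t ∈ Ioo c d, z t ≠ 0) : Real.pi / Ω < d - c := by
  have hm : (c + d) / 2 ∈ Ioo c d := ⟨by linarith, by linarith⟩
  rcases lt_or_gt_of_ne (hno _ hm) with hneg | hpos
  · have hpos' : ∀ t ∈ Ioo c d, 0 < (fun t => -z t) t :=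
      pos_or_neg_on hy.cont.neg Ioo_uIcc_closed
        (fun t ht h0 => hno t ht (by simpa using neg_eq_zero.mp h0)) hm
        (by simpa using hneg)
    exact hy.neg.gap_gt_aux hΩ hq hcd (by simpa using hc) (by simpa using hd) hpos'
  · exact hy.gap_gt_aux hΩ hq hcd hc hd
      (pos_or_neg_on hy.cont Ioo_uIcc_closed hno hm hpos)

/-- Global bound for a continuous periodic function. -/
lemma periodic_bound {T : ℝ} (hT : 0 < T) (hq : Continuous q)
    (hper : ∀ t, q (t + T) = q t) : ∃ M, ∀ t, |q t| ≤ M := by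
  obtain ⟨x0, _, hx0⟩ := isCompact_Icc.exists_isMaxOn
    (⟨0, by constructor <;> [rfl; positivity]⟩ : (Icc (0:ℝ) T).Nonempty)
    ((continuous_abs.comp hq).continuousOn)
  refine ⟨|q x0|, fun t => ?_⟩
  have hp : Function.Periodic q T := hper
  obtain ⟨y, hy, hqy⟩ := hp.exists_mem_Ico₀ hT t
  rw [hqy]
  exact hx0 ⟨hy.1, hy.2.le⟩

/-- Global lower bound attained on a period. -/
lemma periodic_glb {T : ℝ} (hT : 0 < T) (hq : Continuous q)
    (hper : ∀ t, q (t + T) = q t) : ∃ x0, ∀ t, q x0 ≤ q t := by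
  obtain ⟨x0, _, hx0⟩ := isCompact_Icc.exists_isMinOn
    (⟨0, by constructor <;> [rfl; positivity]⟩ : (Icc (0:ℝ) T).Nonempty)
    hq.continuousOn
  refine ⟨x0, fun t => ?_⟩
  have hp : Function.Periodic q T := hper
  obtain ⟨y, hy, hqy⟩ := hp.exists_mem_Ico₀ hT t
  rw [hqy]
  exact hx0 ⟨hy.1, hy.2.le⟩

/-- Global upper bound attained on a period. -/
lemma periodic_lub {T : ℝ} (hT : 0 < T) (hq : Continuous q)
    (hper : ∀ t, q (t + T) = q t) : ∃ x0, ∀ t, q t ≤ q x0 := by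
  obtain ⟨x0, _, hx0⟩ := isCompact_Icc.exists_isMaxOn
    (⟨0, by constructor <;> [rfl; positivity]⟩ : (Icc (0:ℝ) T).Nonempty)
    hq.continuousOn
  refine ⟨x0, fun t => ?_⟩
  have hp : Function.Periodic q T := hper
  obtain ⟨y, hy, hqy⟩ := hp.exists_mem_Ico₀ hT t
  rw [hqy]
  exact hx0 ⟨hy.1, hy.2.le⟩

open Filter Topology in
/-- Zeros of a nontrivial solution are isolated. -/
lemma Sol.isolated (hy : Sol q z) (M : ℝ) (hM : ∀ t, |q t| ≤ M)
    (hnt : ¬ ∀ t, z t = 0) {c : ℝ} (hc : z c = 0) :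
    ∃ ε > 0, ∀ t, t ≠ c → |t - c| < ε → z t ≠ 0 := by
  have hd0 : deriv z c ≠ 0 := by
    intro h0
    exact hnt (hy.zero_of M hM c hc h0)
  have hder := hasDerivAt_iff_tendsto_slope.mp (hy.diff c).hasDerivAt
  have hev : ∀ᶠ t in 𝓝[≠] c, slope z c t ≠ 0 := hder.eventually_ne hd0
  rw [eventually_nhdsWithin_iff] at hev
  rw [Metric.eventually_nhds_iff] at hev
  obtain ⟨ε, hε, h⟩ := hev
  refine ⟨ε, hε, fun t ht hlt h0 => ?_⟩
  have := h (show dist t c < ε by rwa [Real.dist_eq]) ht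
  rw [slope_def_field, h0, hc] at this
  simp at this

/-- Existence of a "next zero" for a nontrivial solution. -/
lemma Sol.next_zero (hy : Sol q z) (M : ℝ) (hM : ∀ t, |q t| ≤ M)
    {ω : ℝ} (hω : 0 < ω) (hq2 : ∀ t, ω ^ 2 ≤ q t)
    (hnt : ¬ ∀ t, z t = 0) {c : ℝ} (hc : z c = 0) :
    ∃ d, c < d ∧ z d = 0 ∧ ∀ t ∈ Ioo c d, z t ≠ 0 := by
  obtain ⟨ε, hε, hiso⟩ := hy.isolated M hM hnt hc
  set S : Set ℝ := {t | z t = 0} ∩ Ici (c + ε) with hS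
  have hScl : IsClosed S :=
    (isClosed_eq hy.cont continuous_const).inter isClosed_Ici
  have hSne : S.Nonempty := by
    obtain ⟨t, ht, hzt⟩ := hy.exists_zero hω hq2 (c + ε)
    exact ⟨t, hzt, ht.1⟩
  have hSbd : BddBelow S := ⟨c + ε, fun x hx => hx.2⟩
  set d := sInf S with hd
  have hdS : d ∈ S := hScl.csInf_mem hSne hSbd
  have hcd : c < d := lt_of_lt_of_le (by linarith) hdS.2
  refine ⟨d, hcd, hdS.1, fun t ht h0 => ?_⟩
  rcases lt_or_ge (t - c) ε with hlt | hge
  · exact hiso t (ne_of_gt ht.1) (by rw [abs_of_pos (by linarith [ht.1])]; exact hlt) h0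
  · have : t ∈ S := ⟨h0, by simp only [mem_Ici]; linarith⟩
    exact absurd (csInf_le hSbd this) (not_le.2 ht.2)

/-- **No real Floquet multiplier.** Under the Zhukovskii gap condition, no nontrivial
solution can satisfy `z (t + T) = λ z t`. -/
lemma no_floquet {T : ℝ} (hT : 0 < T) (n : ℕ) (hq : Continuous q)
    (hper : ∀ t, q (t + T) = q t)
    (hlow : ∀ t, (n : ℝ) ^ 2 * Real.pi ^ 2 / T ^ 2 < q t)
    (hhigh : ∀ t, q t < ((n : ℝ) + 1) ^ 2 * Real.pi ^ 2 / T ^ 2)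
    (hy : Sol q z) (hnt : ¬ ∀ t, z t = 0) {lam : ℝ} (hlam : lam ≠ 0)
    (hfl : ∀ t, z (t + T) = lam * z t) : False := by
  obtain ⟨M, hM⟩ := periodic_bound (q := q) hT hq hper
  obtain ⟨x0, hx0⟩ := periodic_glb (q := q) hT hq hper
  -- positive lower bound for q
  have hδpos : 0 < q x0 := by
    have := hlow x0
    have h0 : (0:ℝ) ≤ (n : ℝ) ^ 2 * Real.pi ^ 2 / T ^ 2 := by positivity
    linarith
  set ω₀ : ℝ := Real.sqrt (q x0) with hω₀
  have hω₀pos : 0 < ω₀ := Real.sqrt_pos.2 hδpos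
  have hω₀sq : ∀ t, ω₀ ^ 2 ≤ q t := by
    intro t
    rw [hω₀, Real.sq_sqrt hδpos.le]
    exact hx0 t
  -- a first zero
  obtain ⟨c₀, _, hc₀⟩ := hy.exists_zero hω₀pos hω₀sq 0
  -- zero set is T-periodic
  have hzshift : ∀ t, z t = 0 → z (t + T) = 0 := by
    intro t h0
    rw [hfl t, h0, mul_zero]
  -- the sequence of successive zeros
  have hnext : ∀ c : {x : ℝ // z x = 0},
      ∃ d, (c : ℝ) < d ∧ z d = 0 ∧ ∀ t ∈ Ioo (c : ℝ) d, z t ≠ 0 :=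
    fun c => hy.next_zero M hM hω₀pos hω₀sq hnt c.2
  set F : {x : ℝ // z x = 0} → {x : ℝ // z x = 0} :=
    fun c => ⟨(hnext c).choose, (hnext c).choose_spec.2.1⟩ with hF
  set cs : ℕ → ℝ := fun k => ((F^[k] ⟨c₀, hc₀⟩ : {x : ℝ // z x = 0}) : ℝ) with hcs
  have hcs0 : cs 0 = c₀ := rfl
  have hzero : ∀ k, z (cs k) = 0 := fun k => (F^[k] ⟨c₀, hc₀⟩).2
  have hstep : ∀ k, cs k < cs (k + 1) ∧ ∀ t ∈ Ioo (cs k) (cs (k+1)), z t ≠ 0 := by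
    intro k
    have : F^[k+1] ⟨c₀, hc₀⟩ = F (F^[k] ⟨c₀, hc₀⟩) := Function.iterate_succ_apply' F k _
    have h2 := (hnext (F^[k] ⟨c₀, hc₀⟩)).choose_spec
    constructor
    · show cs k < cs (k+1)
      simp only [hcs, this]
      exact h2.1
    · intro t ht
      have : cs (k+1) = (hnext (F^[k] ⟨c₀, hc₀⟩)).choose := by
        simp only [hcs, this]
        rfl
      rw [this] at ht
      exact h2.2.2 t ht
  -- gap bounds
  have hπ : (0:ℝ) < Real.pi := Real.pi_pos
  set Ω : ℝ := ((n : ℝ) + 1) * Real.pi / T with hΩ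
  have hΩpos : 0 < Ω := by positivity
  have hΩsq : ∀ t, q t < Ω ^ 2 := by
    intro t
    have : Ω ^ 2 = ((n : ℝ) + 1) ^ 2 * Real.pi ^ 2 / T ^ 2 := by
      rw [hΩ]; ring
    rw [this]
    exact hhigh t
  have hπΩ : Real.pi / Ω = T / ((n : ℝ) + 1) := by
    rw [hΩ]
    have h1 : ((n:ℝ) + 1) ≠ 0 := by positivity
    field_simp
  have hglow : ∀ k, T / ((n : ℝ) + 1) < cs (k+1) - cs k := by
    intro k
    have := hy.gap_gt hΩpos hΩsq (hstep k).1 (hzero k) (hzero (k+1)) (hstep k).2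
    rwa [hπΩ] at this
  -- growth, hence eventually passes c₀ + T
  have hgrow : ∀ k : ℕ, c₀ + k * (T / ((n : ℝ) + 1)) ≤ cs k := by
    intro k
    induction k with
    | zero => simp [hcs0]
    | succ k ih =>
      have := hglow k
      push_cast
      push_cast at ih
      linarith
  have hex : ∃ k, c₀ + T ≤ cs k := by
    refine ⟨n + 1, ?_⟩
    have := hgrow (n + 1)
    have he : ((n:ℝ) + 1) * (T / ((n : ℝ) + 1)) = T := by
      field_simp
    push_cast at this
    linarith [this, he.ge]
  set m := Nat.find hex with hm
  have hmspec : c₀ + T ≤ cs m := Nat.find_spec hex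
  have hmmin : ∀ j, j < m → cs j < c₀ + T := by
    intro j hj
    have := Nat.find_min hex hj
    push_neg at this
    exact this
  have hm1 : 1 ≤ m := by
    rcases Nat.eq_zero_or_pos m with h0 | h1
    · exfalso
      rw [h0] at hmspec
      rw [hcs0] at hmspec
      linarith
    · exact h1
  -- cs m = c₀ + T
  obtain ⟨j, hj⟩ : ∃ j, m = j + 1 := ⟨m - 1, (Nat.succ_pred_eq_of_pos hm1).symm⟩
  have hcm : cs m = c₀ + T := by
    by_contra hne
    have hlt : c₀ + T < cs m := lt_of_le_of_ne hmspec (Ne.symm hne)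
    have hjlt : cs j < c₀ + T := hmmin j (by omega)
    have hmem : (c₀ + T) ∈ Ioo (cs j) (cs (j+1)) := by
      constructor
      · exact hjlt
      · rw [← hj]; exact hlt
    exact (hstep j).2 _ hmem (hzshift c₀ hc₀)
  -- telescoping
  have htel : ∑ k ∈ Finset.range m, (cs (k+1) - cs k) = T := by
    rw [Finset.sum_range_sub cs m, hcs0, hcm]
    ring
  have hnonempty : (Finset.range m).Nonempty := ⟨0, Finset.mem_range.2 (by omega)⟩
  -- lower bound: m * (T/(n+1)) < T
  have hsum_lower : (m : ℝ) * (T / ((n : ℝ) + 1)) < T := by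
    have := Finset.sum_lt_sum_of_nonempty hnonempty
      (f := fun _ => T / ((n : ℝ) + 1)) (g := fun k => cs (k+1) - cs k)
      (fun k _ => hglow k)
    rw [htel] at this
    simpa using this
  have hmn : m ≤ n := by
    by_contra hcon
    push_neg at hcon   -- n < m, so n + 1 ≤ m
    have h1 : ((n:ℝ) + 1) * (T / ((n:ℝ) + 1)) = T := by field_simp
    have h2 : ((n:ℝ) + 1) ≤ (m:ℝ) := by exact_mod_cast hcon
    have h3 : 0 < T / ((n:ℝ) + 1) := by positivity
    nlinarith
  -- case n = 0 : contradiction already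
  rcases Nat.eq_zero_or_pos n with hn0 | hnpos
  · omega
  -- case n ≥ 1 : upper gap bound gives m > n
  · set ω : ℝ := (n : ℝ) * Real.pi / T with hω
    have hωpos : 0 < ω := by
      have : (0:ℝ) < (n:ℝ) := by exact_mod_cast hnpos
      rw [hω]; positivity
    have hωsq : ∀ t, ω ^ 2 < q t := by
      intro t
      have : ω ^ 2 = (n : ℝ) ^ 2 * Real.pi ^ 2 / T ^ 2 := by rw [hω]; ring
      rw [this]
      exact hlow t
    have hπω : Real.pi / ω = T / (n : ℝ) := by
      rw [hω]
      have h1 : (n:ℝ) ≠ 0 := by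
        have : (0:ℝ) < (n:ℝ) := by exact_mod_cast hnpos
        linarith
      field_simp
    have hgup : ∀ k, cs (k+1) - cs k < T / (n : ℝ) := by
      intro k
      have := hy.gap_lt hωpos hωsq (hstep k).1 (hzero k) (hzero (k+1)) (hstep k).2
      rwa [hπω] at this
    have hsum_upper : T < (m : ℝ) * (T / (n : ℝ)) := by
      have := Finset.sum_lt_sum_of_nonempty hnonempty
        (f := fun k => cs (k+1) - cs k) (g := fun _ => T / (n : ℝ))
        (fun k _ => hgup k)
      rw [htel] at this
      simpa using this
    have hnm : (n:ℝ) < (m:ℝ) := by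
      have h1 : (0:ℝ) < (n:ℝ) := by exact_mod_cast hnpos
      have h2 : (n:ℝ) * (T / (n:ℝ)) = T := by field_simp
      by_contra hcon
      push_neg at hcon
      have h3 : 0 < T / (n:ℝ) := by positivity
      nlinarith
    have : n < m := by exact_mod_cast hnm
    omega

lemma rec_closed_form {T θ b : ℝ} {z B : ℝ → ℝ} (hb : b = 2 * Real.cos θ)
    (hrec : ∀ t, z (t + 2 * T) = b * z (t + T) - z t)
    (hbase1 : ∀ t, z (t + T) = z t * Real.cos θ + B t * Real.sin θ) :
    ∀ k : ℤ, ∀ t, z (t + k * T) = z t * Real.cos (k * θ) + B t * Real.sin (k * θ) := by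
  have key : ∀ k : ℤ, (∀ t, z (t + k * T) = z t * Real.cos (k * θ) + B t * Real.sin (k * θ))
      ∧ (∀ t, z (t + (k + 1) * T) = z t * Real.cos ((k + 1) * θ) + B t * Real.sin ((k + 1) * θ)) := by
    intro k
    induction k using Int.induction_on with
    | zero =>
      constructor
      · intro t; push_cast; simp
      · intro t; push_cast; simpa using hbase1 t
    | succ i ih =>
      obtain ⟨h0, h1⟩ := ih
      refine ⟨fun t => by push_cast at h1 ⊢; exact h1 t, fun t => ?_⟩
      push_cast
      have e1 : t + ((i : ℝ) + 1 + 1) * T = (t + (i : ℝ) * T) + 2 * T := by ring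
      rw [e1, hrec]
      have e2 : t + (i : ℝ) * T + T = t + ((i : ℝ) + 1) * T := by ring
      rw [e2]
      have h1' := h1 t
      have h0' := h0 t
      push_cast at h1' h0'
      rw [h1', h0']
      have e3 : ((i : ℝ) + 1 + 1) * θ = ((i : ℝ) + 1) * θ + θ := by ring
      have e4 : (i : ℝ) * θ = ((i : ℝ) + 1) * θ - θ := by ring
      rw [e3, e4, Real.cos_add, Real.sin_add, Real.cos_sub, Real.sin_sub, hb]
      ring
    | pred i ih =>
      obtain ⟨h0, h1⟩ := ih
      refine ⟨fun t => ?_, fun t => by push_cast at h0 ⊢; convert h0 t using 3 <;> ring⟩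
      push_cast
      have e1 : t + (-(i : ℝ) - 1) * T + 2 * T = t + (-(i : ℝ) + 1) * T := by ring
      have hr := hrec (t + (-(i : ℝ) - 1) * T)
      rw [e1] at hr
      have e2 : t + (-(i : ℝ) - 1) * T + T = t + (-(i : ℝ)) * T := by ring
      rw [e2] at hr
      have h1' := h1 t
      have h0' := h0 t
      push_cast at h1' h0'
      have h1'' : z (t + (-(i:ℝ) + 1) * T) = z t * Real.cos ((-(i:ℝ) + 1) * θ) + B t * Real.sin ((-(i:ℝ) + 1) * θ) := by
        convert h1' using 3 <;> ring
      have h0'' : z (t + (-(i:ℝ)) * T) = z t * Real.cos ((-(i:ℝ)) * θ) + B t * Real.sin ((-(i:ℝ)) * θ) := by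
        convert h0' using 3 <;> ring
      rw [h1'', h0''] at hr
      -- hr : z(t + (-i+1)T)... rearranged: solve for z (t + (-i-1) T)
      have : z (t + (-(i : ℝ) - 1) * T) = b * (z t * Real.cos ((-(i:ℝ)) * θ) + B t * Real.sin ((-(i:ℝ)) * θ))
          - (z t * Real.cos ((-(i:ℝ) + 1) * θ) + B t * Real.sin ((-(i:ℝ) + 1) * θ)) := by
        linarith
      rw [this]
      have e3 : (-(i : ℝ) - 1) * θ = (-(i : ℝ)) * θ - θ := by ring
      have e4 : (-(i : ℝ) + 1) * θ = (-(i : ℝ)) * θ + θ := by ring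
      rw [e3, e4, Real.cos_add, Real.sin_add, Real.cos_sub, Real.sin_sub, hb]
      ring
  exact fun k => (key k).1

/-- Derivative of a linear combination of solutions. -/
lemma combo_deriv (hz : Sol q z) {w : ℝ → ℝ} (hw : Sol q w) (a b t : ℝ) :
    deriv (fun t => a * z t + b * w t) t = a * deriv z t + b * deriv w t := by
  rw [deriv_fun_add ((hz.diff t).const_mul a) ((hw.diff t).const_mul b),
    deriv_const_mul a (hz.diff t), deriv_const_mul b (hw.diff t)]

set_option maxHeartbeats 2000000 in
/-- Main boundedness lemma for the Hill equation under the Zhukovskii condition. -/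
lemma hill_bounded {T : ℝ} (hT : 0 < T) (n : ℕ) (hq : Continuous q)
    (hper : ∀ t, q (t + T) = q t)
    (hlow : ∀ t, (n : ℝ) ^ 2 * Real.pi ^ 2 / T ^ 2 < q t)
    (hhigh : ∀ t, q t < ((n : ℝ) + 1) ^ 2 * Real.pi ^ 2 / T ^ 2)
    (hz : Sol q z) : ∃ C, ∀ t, |z t| ≤ C := by
  obtain ⟨M, hM⟩ := periodic_bound (q := q) hT hq hper
  by_cases htriv : ∀ t, z t = 0
  · exact ⟨0, fun t => by rw [htriv t]; simp⟩
  -- the shifted solution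
  have hw : Sol q (fun t => z (t + T)) := hz.shift T hper
  set w : ℝ → ℝ := fun t => z (t + T) with hwdef
  have hwd : ∀ t, deriv w t = deriv z (t + T) := fun t => deriv_comp_add_const z T t
  set u1 := z 0 with hu1
  set u2 := deriv z 0 with hu2
  set v1 := z T with hv1
  set v2 := deriv z T with hv2
  have hw0 : w 0 = v1 := by simp [hwdef, hv1]
  have hw0' : deriv w 0 = v2 := by rw [hwd 0, zero_add]
  set D := u1 * v2 - u2 * v1 with hD
  -- nontrivial initial data
  have hu_ne : ¬ (u1 = 0 ∧ u2 = 0) := by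
    rintro ⟨h1, h2⟩
    exact htriv (hz.zero_of M hM 0 h1 h2)
  -- helper: a Floquet relation contradicts everything
  have hnofl : ∀ lam : ℝ, (∀ t, z (t + T) = lam * z t) → False := by
    intro lam hfl
    rcases eq_or_ne lam 0 with h0 | hne
    · apply htriv
      intro t
      have := hfl (t - T)
      rw [h0, zero_mul] at this
      simpa using this
    · exact no_floquet hT n hq hper hlow hhigh hz htriv hne hfl
  -- D ≠ 0
  have hDne : D ≠ 0 := by
    intro hD0
    have key : ∃ lam : ℝ, v1 = lam * u1 ∧ v2 = lam * u2 := by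
      rcases eq_or_ne u1 0 with h1 | h1
      · have h2 : u2 ≠ 0 := fun h2 => hu_ne ⟨h1, h2⟩
        refine ⟨v2 / u2, ?_, by field_simp⟩
        rw [hD] at hD0
        rw [h1] at hD0 ⊢
        have : u2 * v1 = 0 := by linarith
        rcases mul_eq_zero.mp this with h | h
        · exact absurd h h2
        · rw [h]; ring
      · refine ⟨v1 / u1, by field_simp, ?_⟩
        rw [hD] at hD0
        field_simp
        nlinarith [hD0]
    obtain ⟨lam, hl1, hl2⟩ := key
    -- w = lam • z by uniqueness
    have hc : Sol q (fun t => lam * z t + 0 * z t) := hz.combo hz lam 0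
    have heq : ∀ t, w t = lam * z t + 0 * z t := by
      apply Sol.unique hw hc M hM 0
      · rw [hw0]; simp [hl1, hu1]
      · rw [hw0', combo_deriv hz hz lam 0 0]; simp [hl2, hu2]
    exact hnofl lam (fun t => by have := heq t; simpa using this)
  -- second shift and the recurrence coefficients
  have hper2 : ∀ t, q (t + 2 * T) = q t := by
    intro t
    have h1 := hper (t + T)
    have h2 := hper t
    have e : t + T + T = t + 2 * T := by ring
    rw [e] at h1
    rw [h1, h2]
  have hw2 : Sol q (fun t => z (t + 2 * T)) := hz.shift (2 * T) hper2
  set p1 := z (2 * T) with hp1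
  set p2 := deriv z (2 * T) with hp2
  set a := (p1 * v2 - p2 * v1) / D with ha
  set b := (u1 * p2 - u2 * p1) / D with hb
  -- z (t + 2T) = a z t + b z (t + T)
  have hrec0 : ∀ t, z (t + 2 * T) = a * z t + b * w t := by
    have hc : Sol q (fun t => a * z t + b * w t) := hz.combo hw a b
    apply Sol.unique hw2 hc M hM 0
    · show z (0 + 2 * T) = a * z 0 + b * w 0
      rw [zero_add, hw0, ← hu1]
      rw [ha, hb]
      field_simp
      ring
    · rw [deriv_comp_add_const z (2 * T) 0, zero_add, combo_deriv hz hw a b 0, hw0', ← hu2, ← hp2]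
      rw [ha, hb]
      field_simp
      ring
  -- Wronskian of z and w is constant, giving a = -1
  have ha1 : a = -1 := by
    set W : ℝ → ℝ := fun t => z t * deriv w t - deriv z t * w t with hW
    have hWd : ∀ t, HasDerivAt W 0 t := by
      intro t
      have h1 := (hz.hasDeriv t).mul (hw.hasDeriv2 t)
      have h2 := (hz.hasDeriv2 t).mul (hw.hasDeriv t)
      have h3 := h1.sub h2
      refine h3.congr_deriv ?_
      ring
    have hconst : W T = W 0 :=
      is_const_of_deriv_eq_zero (fun t => (hWd t).differentiableAt)
        (fun t => (hWd t).deriv) T 0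
    have hWT : W T = v1 * p2 - v2 * p1 := by
      simp only [hW, hwd T, hwdef]
      have e : T + T = 2 * T := by ring
      rw [deriv_comp_add_const z T T, e, ← hv1, ← hv2, ← hp1, ← hp2]
    have hW0 : W 0 = D := by
      simp only [hW]
      rw [hw0', hw0, ← hu1, ← hu2, hD]
    rw [hWT, hW0] at hconst
    rw [ha]
    rw [div_eq_iff hDne]
    linarith
  have hrec : ∀ t, z (t + 2 * T) = b * z (t + T) - z t := by
    intro t
    have := hrec0 t
    rw [ha1] at this
    simp only [hwdef] at this
    linarith
  -- |b| < 2
  have hb2 : b ^ 2 < 4 := by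
    by_contra hbc
    push_neg at hbc
    set s := Real.sqrt (b ^ 2 - 4) with hs
    have hs2 : s ^ 2 = b ^ 2 - 4 := Real.sq_sqrt (by linarith)
    set lam := (b + s) / 2 with hlam
    set mu := (b - s) / 2 with hmu
    have hprod : lam * mu = 1 := by
      rw [hlam, hmu]
      nlinarith [hs2]
    have hlamne : lam ≠ 0 := by
      intro h0
      rw [h0, zero_mul] at hprod
      norm_num at hprod
    have hy : Sol q (fun t => 1 * w t + (-mu) * z t) := hw.combo hz 1 (-mu)
    set y : ℝ → ℝ := fun t => 1 * w t + (-mu) * z t with hy_def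
    have hyv : ∀ t, y t = z (t + T) - mu * z t := by
      intro t; simp only [hy_def, hwdef]; ring
    have hyfl : ∀ t, y (t + T) = lam * y t := by
      intro t
      rw [hyv, hyv]
      have e : t + T + T = t + 2 * T := by ring
      rw [e, hrec t]
      have hsum : lam + mu = b := by rw [hlam, hmu]; ring
      linear_combination (-(z (t + T))) * hsum + z t * hprod
    have hynt : ¬ ∀ t, y t = 0 := by
      intro hy0
      have hfl : ∀ t, z (t + T) = mu * z t := by
        intro t
        have := hy0 t
        rw [hyv] at this
        linarith
      exact hnofl mu hfl
    exact no_floquet hT n hq hper hlow hhigh hy hynt hlamne hyfl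
  -- closed form via θ = arccos (b/2)
  have hhalf : -1 < b / 2 ∧ b / 2 < 1 := by constructor <;> nlinarith
  set θ := Real.arccos (b / 2) with hθ
  have hcosθ : Real.cos θ = b / 2 := Real.cos_arccos (by linarith [hhalf.1]) (by linarith [hhalf.2])
  have hsinθ : 0 < Real.sin θ := by
    rw [hθ, Real.sin_arccos]
    have : 0 < 1 - (b / 2) ^ 2 := by nlinarith [hhalf.1, hhalf.2]
    positivity
  have hbθ : b = 2 * Real.cos θ := by rw [hcosθ]; ring
  set B : ℝ → ℝ := fun t => (z (t + T) - z t * Real.cos θ) / Real.sin θ with hB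
  have hbase1 : ∀ t, z (t + T) = z t * Real.cos θ + B t * Real.sin θ := by
    intro t
    rw [hB]
    field_simp
    ring
  have hclosed := rec_closed_form hbθ hrec hbase1
  -- uniform bound over a period
  have hBcont : Continuous B := by
    apply Continuous.div_const
    exact ((hz.cont.comp (by fun_prop)).sub (hz.cont.mul continuous_const))
  have hfc : ContinuousOn (fun t => |z t| + |B t|) (Icc 0 T) :=
    ((hz.cont.abs.add hBcont.abs)).continuousOn
  obtain ⟨x0, _, hx0⟩ := isCompact_Icc.exists_isMaxOn
    (⟨0, by constructor <;> [rfl; positivity]⟩ : (Icc (0:ℝ) T).Nonempty) hfc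
  set C := |z x0| + |B x0| with hC
  refine ⟨C, fun s => ?_⟩
  set k : ℤ := ⌊s / T⌋ with hk
  set t := s - k * T with ht
  have htmem : t ∈ Icc 0 T := by
    constructor
    · exact Int.sub_floor_div_mul_nonneg s hT
    · exact (Int.sub_floor_div_mul_lt s hT).le
  have hst : s = t + k * T := by rw [ht]; ring
  rw [hst, hclosed k t]
  calc |z t * Real.cos (k * θ) + B t * Real.sin (k * θ)|
      ≤ |z t * Real.cos (k * θ)| + |B t * Real.sin (k * θ)| := abs_add_le _ _
    _ ≤ |z t| + |B t| := by
        rw [abs_mul, abs_mul]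
        have h1 : |Real.cos ((k:ℝ) * θ)| ≤ 1 := Real.abs_cos_le_one _
        have h2 : |Real.sin ((k:ℝ) * θ)| ≤ 1 := Real.abs_sin_le_one _
        have h3 : (0:ℝ) ≤ |z t| := abs_nonneg _
        have h4 : (0:ℝ) ≤ |B t| := abs_nonneg _
        nlinarith
    _ ≤ C := hx0 htmem

end Zhuk

/-- Strong stability of the scalar Hill equation `z'' + q(t) z = 0`:
every `C²` solution is bounded on `ℝ`, and the same holds for every continuous
`T`-periodic perturbation `q̃` with `sup_t |q̃(t) − q(t)| < η`. -/
def StronglyStableHill (T : ℝ) (q : ℝ → ℝ) : Prop :=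
  (∀ z : ℝ → ℝ, ContDiff ℝ 2 z → (∀ t, deriv (deriv z) t + q t * z t = 0) →
      ∃ C, ∀ t, |z t| ≤ C) ∧
  ∃ η > 0, ∀ q' : ℝ → ℝ, Continuous q' → (∀ t, q' (t + T) = q' t) →
    (∀ t, |q' t - q t| < η) →
    ∀ z : ℝ → ℝ, ContDiff ℝ 2 z → (∀ t, deriv (deriv z) t + q' t * z t = 0) →
      ∃ C, ∀ t, |z t| ≤ C

/-- **Zhukovskii stability test for the Hill equation.** If `q : ℝ → ℝ` is continuous,
`T`-periodic and `n²π²/T² < q(t) < (n+1)²π²/T²` for all `t`, then the Hill equation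
`z'' + q(t) z = 0` is strongly stable; in particular every `C²` solution is bounded on `ℝ`. -/
theorem zhukovskii_stability_test
    (T : ℝ) (hT : 0 < T) (n : ℕ) (q : ℝ → ℝ) (hq : Continuous q)
    (hper : ∀ t, q (t + T) = q t)
    (hlow : ∀ t, (n : ℝ) ^ 2 * Real.pi ^ 2 / T ^ 2 < q t)
    (hhigh : ∀ t, q t < ((n : ℝ) + 1) ^ 2 * Real.pi ^ 2 / T ^ 2) :
    StronglyStableHill T q ∧
      ∀ z : ℝ → ℝ, ContDiff ℝ 2 z → (∀ t, deriv (deriv z) t + q t * z t = 0) →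
        ∃ C, ∀ t, |z t| ≤ C := by
  have hbase : ∀ z : ℝ → ℝ, ContDiff ℝ 2 z → (∀ t, deriv (deriv z) t + q t * z t = 0) →
      ∃ C, ∀ t, |z t| ≤ C := by
    intro z hsm heq
    exact Zhuk.hill_bounded hT n hq hper hlow hhigh ⟨hsm, heq⟩
  refine ⟨⟨hbase, ?_⟩, hbase⟩
  obtain ⟨xm, hxm⟩ := Zhuk.periodic_glb (q := q) hT hq hper
  obtain ⟨xM, hxM⟩ := Zhuk.periodic_lub (q := q) hT hq hper
  set a : ℝ := (n : ℝ) ^ 2 * Real.pi ^ 2 / T ^ 2 with ha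
  set b : ℝ := ((n : ℝ) + 1) ^ 2 * Real.pi ^ 2 / T ^ 2 with hb
  set η : ℝ := min (q xm - a) (b - q xM) with hη
  have hη1 : 0 < q xm - a := by have := hlow xm; linarith
  have hη2 : 0 < b - q xM := by have := hhigh xM; linarith
  have hηpos : 0 < η := lt_min hη1 hη2
  refine ⟨η, hηpos, fun q' hq' hper' hclose z hsm heq => ?_⟩
  have hlow' : ∀ t, (n : ℝ) ^ 2 * Real.pi ^ 2 / T ^ 2 < q' t := by
    intro t
    have h1 := hclose t
    rw [abs_lt] at h1
    have h2 : η ≤ q xm - a := min_le_left _ _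
    have h3 := hxm t
    rw [← ha]
    linarith
  have hhigh' : ∀ t, q' t < ((n : ℝ) + 1) ^ 2 * Real.pi ^ 2 / T ^ 2 := by
    intro t
    have h1 := hclose t
    rw [abs_lt] at h1
    have h2 : η ≤ b - q xM := min_le_right _ _
    have h3 := hxM t
    rw [← hb]
    linarith
  exact Zhuk.hill_bounded hT n hq' hper' hlow' hhigh' ⟨hsm, heq⟩
end

section
/- Let g, H₀, M, m, s₀, L > 0. Then there exists a unique function s ∈ C²([0, L]) satisfying the cable shape boundary value problem H₀·s''(x) = (M/2 + m·√(1 + s'(x)²))·g for all x ∈ (0, L), with boundary conditions s(0) = s(L) = s₀. -/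
open Set intervalIntegral MeasureTheory Filter Topology

noncomputable def cableF (g H₀ M m t : ℝ) : ℝ := (M / 2 + m * Real.sqrt (1 + t ^ 2)) * g / H₀

theorem cableF_pos {g H₀ M m : ℝ} (hg : 0 < g) (hH₀ : 0 < H₀) (hM : 0 < M) (hm : 0 < m)
    (t : ℝ) : 0 < cableF g H₀ M m t := by
  have h := Real.sqrt_nonneg (1 + t ^ 2)
  unfold cableF; positivity

theorem cableF_cont (g H₀ M m : ℝ) : Continuous (cableF g H₀ M m) := by
  unfold cableF; fun_prop

theorem cableFinv_cont {g H₀ M m : ℝ} (hg : 0 < g) (hH₀ : 0 < H₀) (hM : 0 < M) (hm : 0 < m) :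
    Continuous (fun t => (cableF g H₀ M m t)⁻¹) :=
  (cableF_cont g H₀ M m).inv₀ (fun t => (cableF_pos hg hH₀ hM hm t).ne')

noncomputable def cableG (g H₀ M m u : ℝ) : ℝ := ∫ t in (0:ℝ)..u, (cableF g H₀ M m t)⁻¹

theorem cableG_hasDerivAt {g H₀ M m : ℝ} (hg : 0 < g) (hH₀ : 0 < H₀) (hM : 0 < M) (hm : 0 < m)
    (u : ℝ) : HasDerivAt (cableG g H₀ M m) (cableF g H₀ M m u)⁻¹ u := by
  have hc := cableFinv_cont hg hH₀ hM hm
  exact integral_hasDerivAt_right (hc.intervalIntegrable _ _)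
    (hc.stronglyMeasurableAtFilter _ _) hc.continuousAt

theorem cableG_strictMono {g H₀ M m : ℝ} (hg : 0 < g) (hH₀ : 0 < H₀) (hM : 0 < M) (hm : 0 < m) :
    StrictMono (cableG g H₀ M m) := by
  apply strictMono_of_deriv_pos
  intro x
  rw [(cableG_hasDerivAt hg hH₀ hM hm x).deriv]
  exact inv_pos.2 (cableF_pos hg hH₀ hM hm x)

theorem cableG_odd (g H₀ M m u : ℝ) : cableG g H₀ M m (-u) = -cableG g H₀ M m u := by
  have h1 : (∫ t in (0:ℝ)..u, (cableF g H₀ M m (-t))⁻¹)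
      = ∫ t in (-u)..(0:ℝ), (cableF g H₀ M m t)⁻¹ := by
    simpa using integral_comp_neg (a := (0:ℝ)) (b := u) (fun t => (cableF g H₀ M m t)⁻¹)
  have h2 : ∀ t : ℝ, cableF g H₀ M m (-t) = cableF g H₀ M m t := by
    intro t; unfold cableF; rw [neg_pow]; ring_nf
  simp only [h2] at h1
  rw [cableG, integral_symm, ← h1, cableG]

theorem cableG_lb {g H₀ M m : ℝ} (hg : 0 < g) (hH₀ : 0 < H₀) (hM : 0 < M) (hm : 0 < m)
    {u : ℝ} (hu : 0 ≤ u) :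
    H₀ / ((M / 2 + m) * g) * Real.log (u + 1) ≤ cableG g H₀ M m u := by
  set k := H₀ / ((M / 2 + m) * g) with hk
  have hkpos : 0 < k := by positivity
  have hcomp : ∫ t in (0:ℝ)..u, k * (t + 1)⁻¹ = k * Real.log (u + 1) := by
    rw [intervalIntegral.integral_const_mul]
    have h1 : (∫ t in (0:ℝ)..u, (t + 1)⁻¹) = ∫ x in (1:ℝ)..(u+1), x⁻¹ := by
      simpa using integral_comp_add_right (a := (0:ℝ)) (b := u) (fun x => x⁻¹) 1
    rw [h1, integral_inv (by
      intro h
      rcases Set.mem_uIcc.1 h with ⟨h1, _⟩ | ⟨_, h2⟩ <;> linarith)]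
    rw [div_one]
  rw [← hcomp]
  have huicc : uIcc (0:ℝ) u = Icc 0 u := uIcc_of_le hu
  apply intervalIntegral.integral_mono_on hu
  · apply ContinuousOn.intervalIntegrable
    rw [huicc]
    apply (continuous_const.continuousOn).mul
    apply ContinuousOn.inv₀
    · fun_prop
    · intro x hx; have := hx.1; intro h; linarith
  · exact ((cableFinv_cont hg hH₀ hM hm).intervalIntegrable _ _)
  · intro t ht
    have ht0 : 0 ≤ t := ht.1
    have h1 : Real.sqrt (1 + t ^ 2) ≤ t + 1 := by
      rw [show t + 1 = Real.sqrt ((t+1)^2) by rw [Real.sqrt_sq (by linarith)]]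
      apply Real.sqrt_le_sqrt; nlinarith
    have hFle : cableF g H₀ M m t ≤ (M / 2 + m) * g / H₀ * (t + 1) := by
      unfold cableF
      rw [div_mul_eq_mul_div, div_le_div_iff_of_pos_right hH₀]
      have h2 : M / 2 + m * Real.sqrt (1 + t ^ 2) ≤ (M / 2 + m) * (t + 1) := by nlinarith
      nlinarith [mul_le_mul_of_nonneg_right h2 hg.le]
    have hpos2 : 0 < (M / 2 + m) * g / H₀ * (t + 1) := by positivity
    have hle := inv_anti₀ (cableF_pos hg hH₀ hM hm t) hFle
    calc k * (t + 1)⁻¹ = ((M / 2 + m) * g / H₀ * (t + 1))⁻¹ := by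
          rw [hk]; field_simp
      _ ≤ (cableF g H₀ M m t)⁻¹ := hle

theorem cableG_tendsto_atTop {g H₀ M m : ℝ} (hg : 0 < g) (hH₀ : 0 < H₀) (hM : 0 < M)
    (hm : 0 < m) : Tendsto (cableG g H₀ M m) atTop atTop := by
  apply tendsto_atTop_mono' _ (eventually_atTop.2 ⟨0, fun u hu => cableG_lb hg hH₀ hM hm hu⟩)
  have h1 : Tendsto (fun u : ℝ => Real.log (u + 1)) atTop atTop :=
    Real.tendsto_log_atTop.comp (tendsto_atTop_add_const_right _ 1 tendsto_id)
  exact h1.const_mul_atTop (by positivity)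

theorem cableG_surj {g H₀ M m : ℝ} (hg : 0 < g) (hH₀ : 0 < H₀) (hM : 0 < M) (hm : 0 < m)
    (hcont : Continuous (cableG g H₀ M m)) :
    Function.Surjective (cableG g H₀ M m) := by
  have hbot : Tendsto (cableG g H₀ M m) atBot atBot := by
    have : (cableG g H₀ M m) = fun x => -(cableG g H₀ M m (-x)) := by
      funext x; rw [cableG_odd]; ring
    rw [this]
    exact tendsto_neg_atTop_atBot.comp
      ((cableG_tendsto_atTop hg hH₀ hM hm).comp tendsto_neg_atBot_atTop)
  exact hcont.surjective (cableG_tendsto_atTop hg hH₀ hM hm) hbot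

/-- **Existence and uniqueness of the cable shape.** For positive constants
`g, H₀, M, m, s₀, L` there is a unique `s ∈ C²([0,L])` with
`H₀ s'' = (M/2 + m√(1+s'²)) g` on `(0,L)` and `s(0) = s(L) = s₀`
(uniqueness meaning any two solutions agree on `[0,L]`). -/
theorem cable_shape_exists_unique
    (g H₀ M m s₀ L : ℝ)
    (hg : 0 < g) (hH₀ : 0 < H₀) (hM : 0 < M) (hm : 0 < m) (hs₀ : 0 < s₀) (hL : 0 < L) :
    ∃ s : ℝ → ℝ,
      (ContDiffOn ℝ 2 s (Set.Icc 0 L) ∧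
        (∀ x ∈ Set.Ioo 0 L,
          H₀ * derivWithin (derivWithin s (Set.Icc 0 L)) (Set.Icc 0 L) x
            = (M / 2 + m * Real.sqrt (1 + derivWithin s (Set.Icc 0 L) x ^ 2)) * g) ∧
        s 0 = s₀ ∧ s L = s₀) ∧
      ∀ s2 : ℝ → ℝ,
        (ContDiffOn ℝ 2 s2 (Set.Icc 0 L) ∧
          (∀ x ∈ Set.Ioo 0 L,
            H₀ * derivWithin (derivWithin s2 (Set.Icc 0 L)) (Set.Icc 0 L) x
              = (M / 2 + m * Real.sqrt (1 + derivWithin s2 (Set.Icc 0 L) x ^ 2)) * g) ∧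
          s2 0 = s₀ ∧ s2 L = s₀) →
        Set.EqOn s s2 (Set.Icc 0 L) := by
  have hGd := cableG_hasDerivAt hg hH₀ hM hm
  have hGcont : Continuous (cableG g H₀ M m) :=
    Differentiable.continuous (fun x => (hGd x).differentiableAt)
  have hGmono := cableG_strictMono hg hH₀ hM hm
  have hGsurj := cableG_surj hg hH₀ hM hm hGcont
  set Φ := StrictMono.orderIsoOfSurjective _ hGmono hGsurj with hΦ
  set Gi : ℝ → ℝ := fun y => Φ.symm y with hGidef
  have hGGi : ∀ y, cableG g H₀ M m (Gi y) = y := fun y => Φ.apply_symm_apply y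
  have hGicont : Continuous Gi := Φ.symm.continuous
  have hGiodd : ∀ y, Gi (-y) = -Gi y := fun y => hGmono.injective (by
    rw [hGGi, cableG_odd, hGGi])
  have hGid : ∀ y, HasDerivAt Gi (cableF g H₀ M m (Gi y)) y := fun y => by
    have h := HasDerivAt.of_local_left_inverse hGicont.continuousAt
      (hGd (Gi y)) (inv_ne_zero (cableF_pos hg hH₀ hM hm (Gi y)).ne')
      (Eventually.of_forall hGGi)
    simpa using h
  set u : ℝ → ℝ := fun x => Gi (x - L/2) with hu
  have hucont : Continuous u := hGicont.comp (by fun_prop)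
  have hud : ∀ x, HasDerivAt u (cableF g H₀ M m (u x)) x := fun x => by
    have := (hGid (x - L/2)).comp x ((hasDerivAt_id x).sub_const (L/2))
    simp only [mul_one] at this; exact this
  have hGu : ∀ x, cableG g H₀ M m (u x) = x - L/2 := fun x => hGGi _
  set s : ℝ → ℝ := fun x => s₀ + ∫ t in (0:ℝ)..x, u t with hsdef
  have hsd : ∀ x, HasDerivAt s (u x) x := fun x =>
    (integral_hasDerivAt_right (hucont.intervalIntegrable _ _)
      (hucont.stronglyMeasurableAtFilter _ _) hucont.continuousAt).const_add s₀
  have hderiv_s : deriv s = u := funext fun x => (hsd x).deriv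
  have hderiv_u : deriv u = fun x => cableF g H₀ M m (u x) := funext fun x => (hud x).deriv
  have hsC2 : ContDiff ℝ 2 s := by
    rw [show (2 : WithTop ℕ∞) = 1 + 1 by norm_num, contDiff_succ_iff_deriv]
    refine ⟨fun x => (hsd x).differentiableAt, by simp, ?_⟩
    rw [hderiv_s, contDiff_one_iff_deriv]
    exact ⟨fun x => (hud x).differentiableAt,
      by rw [hderiv_u]; exact (cableF_cont _ _ _ _).comp hucont⟩
  have hUD : UniqueDiffOn ℝ (Icc (0:ℝ) L) := uniqueDiffOn_Icc hL
  have hdw1 : ∀ x ∈ Icc (0:ℝ) L, derivWithin s (Icc 0 L) x = u x := fun x hx =>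
    (hsd x).hasDerivWithinAt.derivWithin (hUD x hx)
  have hdw2 : ∀ x ∈ Icc (0:ℝ) L, derivWithin u (Icc 0 L) x = cableF g H₀ M m (u x) :=
    fun x hx => (hud x).hasDerivWithinAt.derivWithin (hUD x hx)
  have hODE : ∀ x ∈ Ioo (0:ℝ) L, H₀ * derivWithin (derivWithin s (Icc 0 L)) (Icc 0 L) x
      = (M / 2 + m * Real.sqrt (1 + derivWithin s (Icc 0 L) x ^ 2)) * g := by
    intro x hx
    have hx' : x ∈ Icc (0:ℝ) L := Ioo_subset_Icc_self hx
    rw [derivWithin_congr hdw1 (hdw1 x hx'), hdw2 x hx', hdw1 x hx']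
    unfold cableF; field_simp
  have hs0 : s 0 = s₀ := by simp [hsdef]
  have hintu : ∫ t in (0:ℝ)..L, u t = 0 := by
    have h1 : (∫ t in (0:ℝ)..L, u t) = ∫ y in (0 - L/2)..(L - L/2), Gi y :=
      integral_comp_sub_right Gi (L/2)
    have hint : ∀ a b : ℝ, IntervalIntegrable Gi volume a b :=
      fun a b => hGicont.intervalIntegrable a b
    have hsplit := integral_add_adjacent_intervals (hint (-(L/2)) 0) (hint 0 (L/2))
    have h3 : (∫ y in (-(L/2))..(0:ℝ), Gi y) = - ∫ y in (0:ℝ)..(L/2), Gi y := by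
      have h4 := integral_comp_neg (a := (0:ℝ)) (b := L/2) Gi
      simp only [neg_zero] at h4
      rw [← h4]
      simp only [hGiodd]
      rw [intervalIntegral.integral_neg]
    have h5 : (∫ y in (-(L/2))..(L/2), Gi y) = 0 := by rw [← hsplit, h3]; ring
    rw [h1]
    rw [show (0:ℝ) - L/2 = -(L/2) by ring, show L - L/2 = L/2 by ring]
    exact h5
  have hsL : s L = s₀ := by rw [hsdef]; simp [hintu]
  refine ⟨s, ⟨hsC2.contDiffOn, hODE, hs0, hsL⟩, ?_⟩
  -- Uniqueness
  rintro s2 ⟨hC2, hODE2, h20, h2L⟩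
  set u2 : ℝ → ℝ := derivWithin s2 (Icc 0 L) with hu2def
  have hu2C1 : ContDiffOn ℝ 1 u2 (Icc 0 L) := hC2.derivWithin hUD (by norm_num)
  have hu2cont : ContinuousOn u2 (Icc 0 L) := hu2C1.continuousOn
  have hu2diff : DifferentiableOn ℝ u2 (Icc 0 L) := hu2C1.differentiableOn one_ne_zero
  have hs2diff : DifferentiableOn ℝ s2 (Icc 0 L) := hC2.differentiableOn (by norm_num)
  have hnx : ∀ x ∈ Ioo (0:ℝ) L, Icc (0:ℝ) L ∈ 𝓝 x := fun x hx => Icc_mem_nhds hx.1 hx.2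
  have hu2F : ∀ x ∈ Ioo (0:ℝ) L, HasDerivAt u2 (cableF g H₀ M m (u2 x)) x := by
    intro x hx
    have hx' : x ∈ Icc (0:ℝ) L := Ioo_subset_Icc_self hx
    have hda : HasDerivAt u2 (deriv u2 x) x :=
      ((hu2diff x hx').differentiableAt (hnx x hx)).hasDerivAt
    have heq : derivWithin u2 (Icc 0 L) x = deriv u2 x := derivWithin_of_mem_nhds (hnx x hx)
    have hode := hODE2 x hx
    have : deriv u2 x = cableF g H₀ M m (u2 x) := by
      rw [← heq]; unfold cableF; field_simp at hode ⊢; linarith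
    rwa [this] at hda
  have hs2d : ∀ x ∈ Ioo (0:ℝ) L, HasDerivAt s2 (u2 x) x := by
    intro x hx
    have hx' : x ∈ Icc (0:ℝ) L := Ioo_subset_Icc_self hx
    have hda : HasDerivAt s2 (deriv s2 x) x :=
      ((hs2diff x hx').differentiableAt (hnx x hx)).hasDerivAt
    have heq : u2 x = deriv s2 x := derivWithin_of_mem_nhds (hnx x hx)
    rwa [← heq] at hda
  -- the function G(u2 x) - x is locally constant on Ioo 0 L
  set Hf : ℝ → ℝ := fun x => cableG g H₀ M m (u2 x) - x with hHf
  have hHd : ∀ x ∈ Ioo (0:ℝ) L, HasDerivAt Hf 0 x := by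
    intro x hx
    have h1 : HasDerivAt (fun y => cableG g H₀ M m (u2 y))
        ((cableF g H₀ M m (u2 x))⁻¹ * cableF g H₀ M m (u2 x)) x :=
      (hGd (u2 x)).comp x (hu2F x hx)
    have h2 := h1.sub (hasDerivAt_id x)
    have h3 : (cableF g H₀ M m (u2 x))⁻¹ * cableF g H₀ M m (u2 x) - 1 = 0 := by
      rw [inv_mul_cancel₀ (cableF_pos hg hH₀ hM hm (u2 x)).ne']; ring
    rw [h3] at h2
    exact h2
  have hHmono : ∀ x ∈ Ioo (0:ℝ) L, ∀ y ∈ Ioo (0:ℝ) L, x ≤ y → Hf y = Hf x := by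
    intro x hx y hy hxy
    have hsub : Icc x y ⊆ Ioo (0:ℝ) L := fun z hz => ⟨lt_of_lt_of_le hx.1 hz.1,
      lt_of_le_of_lt hz.2 hy.2⟩
    have hcont : ContinuousOn Hf (Icc x y) := fun z hz =>
      ((hHd z (hsub hz)).continuousAt).continuousWithinAt
    have := constant_of_has_deriv_right_zero hcont (fun z hz =>
      ((hHd z (hsub (Ico_subset_Icc_self hz))).hasDerivWithinAt))
    exact this y (right_mem_Icc.2 hxy)
  have hmid : L/2 ∈ Ioo (0:ℝ) L := ⟨by linarith, by linarith⟩
  set d : ℝ := Hf (L/2) with hd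
  have hHconst : ∀ x ∈ Ioo (0:ℝ) L, Hf x = d := by
    intro x hx
    rcases le_total x (L/2) with h | h
    · exact (hHmono x hx (L/2) hmid h).symm
    · exact hHmono (L/2) hmid x hx h
  have hGu2 : ∀ x ∈ Ioo (0:ℝ) L, cableG g H₀ M m (u2 x) = x + d := by
    intro x hx
    have := hHconst x hx
    rw [hHf] at this
    simp only at this
    linarith [this]
  -- FTC for s2 on [0, x]
  have hu2int : ∀ x ∈ Icc (0:ℝ) L, IntervalIntegrable u2 volume 0 x := by
    intro x hx
    apply ContinuousOn.intervalIntegrable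
    rw [uIcc_of_le hx.1]
    exact hu2cont.mono (Icc_subset_Icc le_rfl hx.2)
  have hFTC2 : ∀ x ∈ Icc (0:ℝ) L, ∫ t in (0:ℝ)..x, u2 t = s2 x - s2 0 := by
    intro x hx
    apply integral_eq_sub_of_hasDeriv_right_of_le hx.1
    · exact hC2.continuousOn.mono (Icc_subset_Icc le_rfl hx.2)
    · intro z hz
      have hz' : z ∈ Ioo (0:ℝ) L := ⟨hz.1, lt_of_lt_of_le hz.2 hx.2⟩
      exact (hs2d z hz').hasDerivWithinAt
    · exact hu2int x hx
  have hint2 : ∫ t in (0:ℝ)..L, u2 t = 0 := by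
    rw [hFTC2 L (right_mem_Icc.2 hL.le), h2L, h20]; ring
  -- d = -L/2
  have hdeq : d = -(L/2) := by
    by_contra hne
    rcases lt_or_gt_of_ne hne with hlt | hgt
    · -- d < -L/2 : u2 < u on Ioo, so ∫ (u - u2) > 0, but it equals 0
      have hptw : ∀ x ∈ Ioo (0:ℝ) L, u2 x < u x := by
        intro x hx
        have := hGu2 x hx
        have h2 := hGu x
        apply hGmono.lt_iff_lt.1
        rw [this, h2]; linarith
      have hpos : 0 < ∫ t in (0:ℝ)..L, (u t - u2 t) := by
        apply intervalIntegral_pos_of_pos_on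
        · exact ((hucont.intervalIntegrable 0 L).sub (hu2int L (right_mem_Icc.2 hL.le)))
        · intro x hx; linarith [hptw x hx]
        · exact hL
      rw [intervalIntegral.integral_sub (hucont.intervalIntegrable 0 L)
        (hu2int L (right_mem_Icc.2 hL.le)), hintu, hint2] at hpos
      linarith
    · have hptw : ∀ x ∈ Ioo (0:ℝ) L, u x < u2 x := by
        intro x hx
        have := hGu2 x hx
        have h2 := hGu x
        apply hGmono.lt_iff_lt.1
        rw [this, h2]; linarith
      have hpos : 0 < ∫ t in (0:ℝ)..L, (u2 t - u t) := by
        apply intervalIntegral_pos_of_pos_on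
        · exact ((hu2int L (right_mem_Icc.2 hL.le)).sub (hucont.intervalIntegrable 0 L))
        · intro x hx; linarith [hptw x hx]
        · exact hL
      rw [intervalIntegral.integral_sub (hu2int L (right_mem_Icc.2 hL.le))
        (hucont.intervalIntegrable 0 L), hintu, hint2] at hpos
      linarith
  have hueq : ∀ x ∈ Ioo (0:ℝ) L, u2 x = u x := by
    intro x hx
    apply hGmono.injective
    rw [hGu2 x hx, hGu x, hdeq]; ring
  -- conclude
  intro x hx
  have hxL : x ≤ L := hx.2
  have hae : ∀ᵐ t : ℝ ∂volume, t ≠ x := by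
    rw [MeasureTheory.ae_iff]
    have : {a : ℝ | ¬a ≠ x} = {x} := by ext a; simp
    rw [this]
    exact Real.volume_singleton
  have hcong : ∫ t in (0:ℝ)..x, u2 t = ∫ t in (0:ℝ)..x, u t := by
    apply intervalIntegral.integral_congr_ae
    filter_upwards [hae] with t hne ht
    rw [uIoc_of_le hx.1] at ht
    have htIoo : t ∈ Ioo (0:ℝ) L := ⟨ht.1, lt_of_lt_of_le (lt_of_le_of_ne ht.2 hne) hxL⟩
    exact hueq t htIoo
  have h1 := hFTC2 x hx
  rw [hcong, h20] at h1
  have : s2 x = s₀ + ∫ t in (0:ℝ)..x, u t := by linarith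
  rw [hsdef]
  simp only
  rw [this]
end

section
/- Let g, H₀, M, m, s₀, L > 0 and let s ∈ C²([0, L]) satisfy the cable shape boundary value problem H₀·s''(x) = (M/2 + m·√(1 + s'(x)²))·g for all x ∈ (0, L), with s(0) = s(L) = s₀. Then s is symmetric with respect to the midpoint x = L/2, that is, s(L − x) = s(x) for all x ∈ [0, L]. -/
/-- Lipschitz-type bound for `p ↦ √(1 + p²)`. -/
lemma sqrt_one_add_sq_lip (p q : ℝ) :
    Real.sqrt (1 + p ^ 2) ≤ Real.sqrt (1 + q ^ 2) + |p - q| := by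
  have h1 : (0:ℝ) ≤ 1 + q ^ 2 := by positivity
  have hS := Real.sq_sqrt h1
  have hSn := Real.sqrt_nonneg (1 + q ^ 2)
  have hq : |q| ≤ Real.sqrt (1 + q ^ 2) := by
    rw [← Real.sqrt_sq_eq_abs]
    exact Real.sqrt_le_sqrt (by nlinarith)
  have habs : q * (p - q) ≤ |q| * |p - q| := by
    rw [← abs_mul]; exact le_abs_self _
  have hd := abs_nonneg (p - q)
  have hd2 := sq_abs (p - q)
  have hqn := abs_nonneg q
  calc Real.sqrt (1 + p ^ 2) ≤ Real.sqrt ((Real.sqrt (1 + q ^ 2) + |p - q|) ^ 2) :=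
        Real.sqrt_le_sqrt (by nlinarith)
    _ = _ := Real.sqrt_sq (by positivity)

/-- **Symmetry of the cable shape.** If `s ∈ C²([0,L])` solves the cable shape
boundary value problem `H₀ s'' = (M/2 + m√(1+s'²)) g` on `(0,L)` with
`s(0) = s(L) = s₀`, then `s` is symmetric about `x = L/2`:
`s(L − x) = s(x)` for all `x ∈ [0,L]`. -/
theorem cable_shape_symmetric
    (g H₀ M m s₀ L : ℝ)
    (hg : 0 < g) (hH₀ : 0 < H₀) (hM : 0 < M) (hm : 0 < m) (hs₀ : 0 < s₀) (hL : 0 < L)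
    (s s' s'' : ℝ → ℝ)
    (hs' : ∀ x ∈ Set.Icc 0 L, HasDerivWithinAt s (s' x) (Set.Icc 0 L) x)
    (hs'' : ∀ x ∈ Set.Icc 0 L, HasDerivWithinAt s' (s'' x) (Set.Icc 0 L) x)
    (hs''c : ContinuousOn s'' (Set.Icc 0 L))
    (hode : ∀ x ∈ Set.Ioo 0 L,
      H₀ * s'' x = (M / 2 + m * Real.sqrt (1 + s' x ^ 2)) * g)
    (h0 : s 0 = s₀) (hLend : s L = s₀) :
    ∀ x ∈ Set.Icc 0 L, s (L - x) = s x := by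
  have hH₀' : H₀ ≠ 0 := ne_of_gt hH₀
  -- the RHS of the first-order ODE for s'
  set G : ℝ → ℝ := fun p => (M / 2 + m * Real.sqrt (1 + p ^ 2)) * g / H₀ with hGdef
  have hK0 : (0:ℝ) ≤ m * g / H₀ := by positivity
  have hGlip : LipschitzWith ⟨m * g / H₀, hK0⟩ G := by
    refine lipschitzWith_iff_dist_le_mul.mpr ?_
    intro p q
    have hdiff : G p - G q =
        m * g / H₀ * (Real.sqrt (1 + p ^ 2) - Real.sqrt (1 + q ^ 2)) := by
      simp only [hGdef]; field_simp; ring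
    have hsq : |Real.sqrt (1 + p ^ 2) - Real.sqrt (1 + q ^ 2)| ≤ |p - q| := by
      rw [abs_sub_le_iff]
      constructor
      · have := sqrt_one_add_sq_lip p q; linarith
      · have := sqrt_one_add_sq_lip q p
        rw [abs_sub_comm] at this; linarith
    rw [Real.dist_eq, Real.dist_eq, hdiff, abs_mul, abs_of_nonneg hK0]
    exact mul_le_mul_of_nonneg_left hsq hK0
  -- basic continuity facts
  have hs'cont : ContinuousOn s' (Set.Icc 0 L) :=
    fun x hx => (hs'' x hx).continuousWithinAt
  have hscont : ContinuousOn s (Set.Icc 0 L) :=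
    fun x hx => (hs' x hx).continuousWithinAt
  have hmapsTo : Set.MapsTo (fun y : ℝ => L - y) (Set.Icc 0 L) (Set.Icc 0 L) := by
    intro y hy
    simp only [Set.mem_Icc] at *
    constructor <;> linarith [hy.1, hy.2]
  have hreflcont : ContinuousOn (fun x : ℝ => s' (L - x)) (Set.Icc 0 L) :=
    hs'cont.comp ((continuous_const.sub continuous_id).continuousOn) hmapsTo
  -- the first order ODE for s' in the interior
  have hvode : ∀ x ∈ Set.Ioo 0 L, HasDerivAt s' (G (s' x)) x := by
    intro x hx
    have hx' : x ∈ Set.Icc 0 L := Set.mem_Icc_of_Ioo hx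
    have hd : HasDerivAt s' (s'' x) x :=
      (hs'' x hx').hasDerivAt (Icc_mem_nhds hx.1 hx.2)
    have : s'' x = G (s' x) := by
      have h := hode x hx
      simp only [hGdef]
      field_simp
      linarith [h]
    rwa [this] at hd
  -- FTC : the integral of s' over [0, L] vanishes
  have hs'int : IntervalIntegrable s' MeasureTheory.volume 0 L := by
    apply ContinuousOn.intervalIntegrable
    rwa [Set.uIcc_of_le hL.le]
  have hftc : (∫ x in (0:ℝ)..L, s' x) = 0 := by
    rw [intervalIntegral.integral_eq_sub_of_hasDeriv_right_of_le hL.le hscont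
      (fun x hx => ((hs' x (Set.mem_Icc_of_Ioo hx)).hasDerivAt
        (Icc_mem_nhds hx.1 hx.2)).hasDerivWithinAt) hs'int, hLend, h0, sub_self]
  -- the function d x = s' x + s' (L - x) is continuous with integral 0
  set d : ℝ → ℝ := fun x => s' x + s' (L - x) with hddef
  have hdcont : ContinuousOn d (Set.Icc 0 L) := hs'cont.add hreflcont
  have hdint : IntervalIntegrable d MeasureTheory.volume 0 L := by
    apply ContinuousOn.intervalIntegrable
    rwa [Set.uIcc_of_le hL.le]
  have hrint : IntervalIntegrable (fun x => s' (L - x)) MeasureTheory.volume 0 L := by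
    apply ContinuousOn.intervalIntegrable
    rwa [Set.uIcc_of_le hL.le]
  have hdzero : (∫ x in (0:ℝ)..L, d x) = 0 := by
    have hcomp : (∫ x in (0:ℝ)..L, s' (L - x)) = ∫ x in (0:ℝ)..L, s' x := by
      rw [intervalIntegral.integral_comp_sub_left s' L]
      norm_num
    rw [hddef]
    rw [intervalIntegral.integral_add hs'int hrint, hcomp, hftc]
    norm_num
  -- d has a zero in the open interval
  have hmid : L / 2 ∈ Set.Ioo (0:ℝ) L := by constructor <;> linarith
  have hIooIcc : Set.Ioo (0:ℝ) L ⊆ Set.Icc 0 L := Set.Ioo_subset_Icc_self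
  obtain ⟨c, hc, hdc⟩ : ∃ c ∈ Set.Ioo (0:ℝ) L, d c = 0 := by
    by_contra hcon
    push_neg at hcon
    have hconst : (∀ x ∈ Set.Ioo (0:ℝ) L, 0 < d x) ∨
        (∀ x ∈ Set.Ioo (0:ℝ) L, d x < 0) := by
      rcases (hcon _ hmid).lt_or_gt with hneg | hpos
      · right
        intro x hx
        rcases (hcon x hx).lt_or_gt with h | h
        · exact h
        · exfalso
          have huIcc : Set.uIcc x (L / 2) ⊆ Set.Ioo 0 L :=
            Set.OrdConnected.uIcc_subset Set.ordConnected_Ioo hx hmid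
          have h0mem : (0:ℝ) ∈ Set.uIcc (d x) (d (L / 2)) := by
            rw [Set.mem_uIcc]; right; exact ⟨hneg.le, h.le⟩
          obtain ⟨y, hy, hy0⟩ :=
            intermediate_value_uIcc (hdcont.mono (huIcc.trans hIooIcc)) h0mem
          exact hcon y (huIcc hy) hy0
      · left
        intro x hx
        rcases (hcon x hx).lt_or_gt with h | h
        · exfalso
          have huIcc : Set.uIcc x (L / 2) ⊆ Set.Ioo 0 L :=
            Set.OrdConnected.uIcc_subset Set.ordConnected_Ioo hx hmid
          have h0mem : (0:ℝ) ∈ Set.uIcc (d x) (d (L / 2)) := by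
            rw [Set.mem_uIcc]; left; exact ⟨h.le, hpos.le⟩
          obtain ⟨y, hy, hy0⟩ :=
            intermediate_value_uIcc (hdcont.mono (huIcc.trans hIooIcc)) h0mem
          exact hcon y (huIcc hy) hy0
        · exact h
    rcases hconst with hpos | hneg
    · have := intervalIntegral.intervalIntegral_pos_of_pos_on hdint hpos hL
      rw [hdzero] at this; exact lt_irrefl 0 this
    · have hnegint : (0:ℝ) < ∫ x in (0:ℝ)..L, -(d x) :=
        intervalIntegral.intervalIntegral_pos_of_pos_on hdint.neg
          (fun x hx => by simpa using (hneg x hx)) hL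
      rw [intervalIntegral.integral_neg, hdzero, neg_zero] at hnegint
      exact lt_irrefl 0 hnegint
  -- the reflected function w x = -s' (L - x) solves the same ODE
  set w : ℝ → ℝ := fun x => -s' (L - x) with hwdef
  have hGeven : ∀ p : ℝ, G (-p) = G p := by
    intro p
    have h2 : (-p) ^ 2 = p ^ 2 := by ring
    simp only [hGdef, h2]
  have hwode : ∀ x ∈ Set.Ioo 0 L, HasDerivAt w (G (w x)) x := by
    intro x hx
    have hLx : L - x ∈ Set.Ioo 0 L := by
      constructor <;> [linarith [hx.2]; linarith [hx.1]]
    have hinner : HasDerivAt (fun y : ℝ => L - y) (-1) x := by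
      simpa using (hasDerivAt_id x).const_sub L
    have hcomp : HasDerivAt (fun y : ℝ => s' (L - y)) (G (s' (L - x)) * -1) x :=
      HasDerivAt.comp x (hvode (L - x) hLx) hinner
    have heq2 : G (w x) = -(G (s' (L - x)) * -1) := by
      have hwx : w x = -(s' (L - x)) := rfl
      rw [hwx, hGeven]; ring
    rw [heq2]
    exact hcomp.neg
  -- uniqueness of solutions: s' = w on [0, L]
  have heqon : Set.EqOn s' w (Set.Icc 0 L) := by
    have hwcont : ContinuousOn w (Set.Icc 0 L) := hreflcont.neg
    have hc0 : s' c = w c := by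
      have : s' c + s' (L - c) = 0 := hdc
      rw [hwdef]; simp only []; linarith
    exact ODE_solution_unique_of_mem_Icc
      (v := fun _ p => G p) (s := fun _ => Set.univ) (K := ⟨m * g / H₀, hK0⟩)
      (fun _ _ => hGlip.lipschitzOnWith) hc hs'cont
      (fun x hx => hvode x hx) (fun _ _ => Set.mem_univ _)
      hwcont (fun x hx => hwode x hx) (fun _ _ => Set.mem_univ _) hc0
  -- hence u x = s (L - x) - s x has zero derivative, and u 0 = 0
  have key : ∀ x ∈ Set.Icc 0 L, s' (L - x) = -s' x := by
    intro x hx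
    have := heqon hx
    rw [hwdef] at this
    simp only [] at this
    linarith
  set u : ℝ → ℝ := fun x => s (L - x) - s x with hudef
  have hu' : ∀ x ∈ Set.Icc 0 L, HasDerivWithinAt u 0 (Set.Icc 0 L) x := by
    intro x hx
    have hinner : HasDerivWithinAt (fun y : ℝ => L - y) (-1) (Set.Icc 0 L) x := by
      simpa using (hasDerivWithinAt_id x (Set.Icc 0 L)).const_sub L
    have hcomp : HasDerivWithinAt (fun y : ℝ => s (L - y)) (s' (L - x) * -1)
        (Set.Icc 0 L) x :=
      HasDerivWithinAt.comp x (hs' (L - x) (hmapsTo hx)) hinner hmapsTo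
    have hder : HasDerivWithinAt u (s' (L - x) * -1 - s' x) (Set.Icc 0 L) x :=
      hcomp.sub (hs' x hx)
    have : s' (L - x) * -1 - s' x = 0 := by rw [key x hx]; ring
    rwa [this] at hder
  intro x hx
  have hconv : Convex ℝ (Set.Icc (0:ℝ) L) := convex_Icc 0 L
  have h0mem : (0:ℝ) ∈ Set.Icc (0:ℝ) L := Set.left_mem_Icc.mpr hL.le
  have hbound := hconv.norm_image_sub_le_of_norm_hasDerivWithin_le
    (C := 0) (f' := fun _ => (0:ℝ)) hu' (fun y _ => by simp) h0mem hx
  have hu0 : u 0 = 0 := by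
    simp only [hudef, sub_zero, hLend, h0, sub_self]
  rw [hu0, sub_zero] at hbound
  simp only [zero_mul, norm_le_zero_iff] at hbound
  have hux : s (L - x) - s x = 0 := hbound
  linarith
end

section
/- Let L > 0, H₀ ∈ ℝ, s ∈ C¹([0, L]) and set ξ(x) := √(1 + s'(x)²). Let p ∈ C¹([0, L]). Then, as ε → 0, the exact cable deformation energy admits the third-order expansion H₀·∫₀^L ξ(x)·( √(1 + (s'(x) − ε·p'(x))²) − ξ(x) ) dx = H₀·∫₀^L ( −ε·s'(x)p'(x) + ε²·p'(x)²/(2ξ(x)²) + ε³·s'(x)p'(x)³/(2ξ(x)⁴) ) dx + o(ε³). -/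
open Asymptotics Set

noncomputable def qq (t : ℝ) : ℝ := Real.sqrt (1 + t ^ 2)

lemma qq_sq (t : ℝ) : qq t ^ 2 = 1 + t ^ 2 := Real.sq_sqrt (by positivity)

lemma one_le_qq (t : ℝ) : 1 ≤ qq t := by
  rw [show (1:ℝ) = Real.sqrt 1 by simp]
  exact Real.sqrt_le_sqrt (by nlinarith)

lemma qq_pos (t : ℝ) : 0 < qq t := lt_of_lt_of_le one_pos (one_le_qq t)

lemma qq_neg (t : ℝ) : qq (-t) = qq t := by simp [qq]

lemma hd0 (t : ℝ) : HasDerivAt qq (t / qq t) t := by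
  have h : HasDerivAt (fun t : ℝ => 1 + t ^ 2) (2 * t) t := by
    simpa using (hasDerivAt_pow 2 t).const_add 1
  have h2 := h.sqrt (by positivity)
  refine HasDerivAt.congr_deriv h2 (Eq.symm ?_)
  have := (qq_pos t).ne'
  rw [qq] at *
  field_simp

lemma hd1 (t : ℝ) : HasDerivAt (fun t => t / qq t) (1 / qq t ^ 3) t := by
  have h := (hasDerivAt_id t).div (hd0 t) (qq_pos t).ne'
  refine HasDerivAt.congr_deriv h (Eq.symm ?_)
  have hne := (qq_pos t).ne'
  simp only [id, Pi.pow_apply]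
  field_simp
  linear_combination (-1 : ℝ) * qq_sq t

lemma hd2 (t : ℝ) : HasDerivAt (fun t => 1 / qq t ^ 3) (-3 * t / qq t ^ 5) t := by
  have h := (hasDerivAt_const t (1:ℝ)).div ((hd0 t).pow 3) (pow_ne_zero 3 (qq_pos t).ne')
  refine HasDerivAt.congr_deriv h (Eq.symm ?_)
  have hne := (qq_pos t).ne'
  simp only [id, Pi.pow_apply]
  field_simp
  ring

lemma hd3 (t : ℝ) : HasDerivAt (fun t => -3 * t / qq t ^ 5) ((12 * t ^ 2 - 3) / qq t ^ 7) t := by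
  have h := ((hasDerivAt_id t).const_mul (-3 : ℝ)).div ((hd0 t).pow 5) (pow_ne_zero 5 (qq_pos t).ne')
  refine HasDerivAt.congr_deriv h (Eq.symm ?_)
  have hne := (qq_pos t).ne'
  simp only [id, Pi.pow_apply]
  field_simp
  linear_combination (3 * qq t ^ 4) * qq_sq t

lemma qq_contDiff : ContDiff ℝ 3 qq := by
  apply ContDiff.sqrt (contDiff_const.add (contDiff_id.pow 2))
  intro t
  positivity

section iterated

variable {s : Set ℝ}

lemma itq1 (hs : UniqueDiffOn ℝ s) {x : ℝ} (hx : x ∈ s) : iteratedDerivWithin 1 qq s x = x / qq x := by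
  rw [iteratedDerivWithin_succ]
  rw [iteratedDerivWithin_zero]
  exact ((hd0 x).hasDerivWithinAt).derivWithin (hs x hx)

lemma itq2 (hs : UniqueDiffOn ℝ s) {x : ℝ} (hx : x ∈ s) : iteratedDerivWithin 2 qq s x = 1 / qq x ^ 3 := by
  rw [iteratedDerivWithin_succ,
    derivWithin_congr (fun y hy => itq1 hs hy) (itq1 hs hx)]
  exact ((hd1 x).hasDerivWithinAt).derivWithin (hs x hx)

lemma itq3 (hs : UniqueDiffOn ℝ s) {x : ℝ} (hx : x ∈ s) : iteratedDerivWithin 3 qq s x = -3 * x / qq x ^ 5 := by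
  rw [iteratedDerivWithin_succ,
    derivWithin_congr (fun y hy => itq2 hs hy) (itq2 hs hx)]
  exact ((hd2 x).hasDerivWithinAt).derivWithin (hs x hx)

lemma itq4 (hs : UniqueDiffOn ℝ s) {x : ℝ} (hx : x ∈ s) :
    iteratedDerivWithin 4 qq s x = (12 * x ^ 2 - 3) / qq x ^ 7 := by
  rw [iteratedDerivWithin_succ,
    derivWithin_congr (fun y hy => itq3 hs hy) (itq3 hs hx)]
  exact ((hd3 x).hasDerivWithinAt).derivWithin (hs x hx)

end iterated

lemma g4_bound (t : ℝ) : |(12 * t ^ 2 - 3) / qq t ^ 7| ≤ 15 := by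
  rw [abs_div, abs_of_pos (pow_pos (qq_pos t) 7), div_le_iff₀ (pow_pos (qq_pos t) 7)]
  have h1 : qq t ^ 2 ≤ qq t ^ 7 := pow_le_pow_right₀ (one_le_qq t) (by norm_num)
  have h2 := qq_sq t
  rw [abs_le]
  constructor <;> nlinarith [sq_nonneg t, pow_pos (qq_pos t) 7]

lemma key_pos (a h : ℝ) (hh : 0 < h) :
    |qq (a + h) - (qq a + h * (a / qq a) + h ^ 2 / (2 * qq a ^ 3)
      - a * h ^ 3 / (2 * qq a ^ 5))| ≤ h ^ 4 := by
  have hlt : a < a + h := by linarith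
  have hu : UniqueDiffOn ℝ (Icc a (a + h)) := uniqueDiffOn_Icc hlt
  have hcd : ContDiffOn ℝ 3 qq (Icc a (a + h)) := qq_contDiff.contDiffOn
  have hdiff : DifferentiableOn ℝ (iteratedDerivWithin 3 qq (Icc a (a + h))) (Ioo a (a + h)) := by
    refine DifferentiableOn.congr (f := fun t => -3 * t / qq t ^ 5) ?_ ?_
    · intro y _; exact (hd3 y).differentiableAt.differentiableWithinAt
    · intro y hy; exact itq3 hu (Ioo_subset_Icc_self hy)
  obtain ⟨x', hx', hT⟩ := taylor_mean_remainder_lagrange (n := 3) hlt.ne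
    (by rw [uIcc_of_le hlt.le]; exact hcd) (by rw [uIcc_of_le hlt.le, uIoo_of_le hlt.le]; exact hdiff)
  rw [uIcc_of_le hlt.le] at hT
  rw [uIoo_of_le hlt.le] at hx'
  have ha : a ∈ Icc a (a + h) := left_mem_Icc.mpr hlt.le
  have hsum : taylorWithinEval qq 3 (Icc a (a + h)) a (a + h)
      = qq a + h * (a / qq a) + h ^ 2 / (2 * qq a ^ 3) - a * h ^ 3 / (2 * qq a ^ 5) := by
    rw [taylor_within_apply]
    rw [Finset.sum_range_succ, Finset.sum_range_succ, Finset.sum_range_succ,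
      Finset.sum_range_one]
    rw [itq1 hu ha, itq2 hu ha, itq3 hu ha]
    rw [iteratedDerivWithin_zero]
    have hne := (qq_pos a).ne'
    simp only [smul_eq_mul, Nat.factorial]
    push_cast
    field_simp
    ring
  rw [itq4 hu (Ioo_subset_Icc_self hx')] at hT
  rw [hsum] at hT
  rw [hT]
  have hb := g4_bound x'
  have h4 : (0:ℝ) < h ^ 4 := by positivity
  rw [abs_div, abs_mul]
  rw [show a + h - a = h by ring]
  have : |h ^ (3 + 1)| = h ^ 4 := by
    rw [abs_of_pos (by positivity)]
  rw [this]
  have hfac : |(((3 + 1).factorial : ℕ) : ℝ)| = 24 := by norm_num [Nat.factorial]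
  rw [hfac, div_le_iff₀ (by norm_num : (0:ℝ) < 24)]
  nlinarith [abs_nonneg ((12 * x' ^ 2 - 3) / qq x' ^ 7)]

lemma key (a h : ℝ) :
    |qq (a + h) - (qq a + h * (a / qq a) + h ^ 2 / (2 * qq a ^ 3)
      - a * h ^ 3 / (2 * qq a ^ 5))| ≤ h ^ 4 := by
  rcases lt_trichotomy h 0 with hneg | hz | hpos
  · have hk := key_pos (-a) (-h) (by linarith)
    have e1 : qq (-a + -h) = qq (a + h) := by
      rw [show -a + -h = -(a + h) by ring, qq_neg]
    have e2 : qq (-a) + -h * (-a / qq (-a)) + (-h) ^ 2 / (2 * qq (-a) ^ 3)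
        - -a * (-h) ^ 3 / (2 * qq (-a) ^ 5)
        = qq a + h * (a / qq a) + h ^ 2 / (2 * qq a ^ 3) - a * h ^ 3 / (2 * qq a ^ 5) := by
      rw [qq_neg]; ring
    rw [e1, e2] at hk
    calc |_| ≤ (-h) ^ 4 := hk
    _ = h ^ 4 := by ring
  · subst hz; simp
  · exact key_pos a h hpos

/-- **Third-order expansion of the cable deformation energy.** With `s, p ∈ C¹([0,L])`
and `ξ = √(1+s'²)`, as `ε → 0`,
`H₀ ∫₀^L ξ (√(1+(s'−εp')²) − ξ) dx
  = H₀ ∫₀^L (−ε s'p' + ε² p'²/(2ξ²) + ε³ s'p'³/(2ξ⁴)) dx + o(ε³)`. -/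
theorem cable_energy_expansion
    (L H₀ : ℝ) (hL : 0 < L)
    (s s' p p' : ℝ → ℝ)
    (hs' : ∀ x ∈ Set.Icc 0 L, HasDerivWithinAt s (s' x) (Set.Icc 0 L) x)
    (hs'c : ContinuousOn s' (Set.Icc 0 L))
    (hp' : ∀ x ∈ Set.Icc 0 L, HasDerivWithinAt p (p' x) (Set.Icc 0 L) x)
    (hp'c : ContinuousOn p' (Set.Icc 0 L))
    (ξ : ℝ → ℝ) (hξ : ∀ x, ξ x = Real.sqrt (1 + s' x ^ 2)) :
    (fun ε : ℝ =>
        H₀ * (∫ x in (0 : ℝ)..L, ξ x * (Real.sqrt (1 + (s' x - ε * p' x) ^ 2) - ξ x))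
          - H₀ * (∫ x in (0 : ℝ)..L,
              (-(ε * s' x * p' x) + ε ^ 2 * p' x ^ 2 / (2 * ξ x ^ 2)
                + ε ^ 3 * s' x * p' x ^ 3 / (2 * ξ x ^ 4))))
      =o[nhds 0] (fun ε : ℝ => ε ^ 3) := by
  have hxi : ∀ x, ξ x = qq (s' x) := fun x => hξ x
  have hxipos : ∀ x, 0 < ξ x := fun x => by rw [hxi]; exact qq_pos _
  -- bounds on s' and p'
  obtain ⟨Ms, hMs⟩ := isCompact_Icc.exists_bound_of_continuousOn hs'c
  obtain ⟨Mp, hMp⟩ := isCompact_Icc.exists_bound_of_continuousOn hp'c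
  have h0mem : (0:ℝ) ∈ Icc 0 L := left_mem_Icc.mpr hL.le
  have hMp0 : 0 ≤ Mp := le_trans (norm_nonneg _) (hMp 0 h0mem)
  set C : ℝ := Real.sqrt (1 + Ms ^ 2) * Mp ^ 4 with hC
  have hC0 : 0 ≤ C := by positivity
  -- pointwise bound on the integrand difference
  have hptwise : ∀ (ε : ℝ), ∀ x ∈ Icc (0:ℝ) L,
      |ξ x * (Real.sqrt (1 + (s' x - ε * p' x) ^ 2) - ξ x)
        - (-(ε * s' x * p' x) + ε ^ 2 * p' x ^ 2 / (2 * ξ x ^ 2)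
          + ε ^ 3 * s' x * p' x ^ 3 / (2 * ξ x ^ 4))| ≤ C * ε ^ 4 := by
    intro ε x hx
    set a := s' x
    set b := p' x
    have hk := key a (-(ε * b))
    have hqa := qq_pos a
    have hident : ξ x * (Real.sqrt (1 + (a - ε * b) ^ 2) - ξ x)
        - (-(ε * a * b) + ε ^ 2 * b ^ 2 / (2 * ξ x ^ 2) + ε ^ 3 * a * b ^ 3 / (2 * ξ x ^ 4))
        = qq a * (qq (a + -(ε * b)) - (qq a + -(ε * b) * (a / qq a)
            + (-(ε * b)) ^ 2 / (2 * qq a ^ 3) - a * (-(ε * b)) ^ 3 / (2 * qq a ^ 5))) := by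
      rw [hxi x, show s' x = a from rfl]
      have e : qq (a + -(ε * b)) = Real.sqrt (1 + (a - ε * b) ^ 2) := by
        rw [show a + -(ε * b) = a - ε * b by ring]; rfl
      rw [e]
      have h2 := qq_sq a
      field_simp
      ring_nf
    rw [hident, abs_mul, abs_of_pos hqa]
    have step1 : qq a * |qq (a + -(ε * b)) - (qq a + -(ε * b) * (a / qq a)
        + (-(ε * b)) ^ 2 / (2 * qq a ^ 3) - a * (-(ε * b)) ^ 3 / (2 * qq a ^ 5))|
        ≤ qq a * (ε * b) ^ 4 := by
      have : (-(ε * b)) ^ 4 = (ε * b) ^ 4 := by ring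
      exact mul_le_mul_of_nonneg_left (by rw [← this]; exact hk) hqa.le
    refine step1.trans ?_
    have hbnd1 : qq a ≤ Real.sqrt (1 + Ms ^ 2) := by
      apply Real.sqrt_le_sqrt
      have := hMs x hx
      rw [Real.norm_eq_abs] at this
      nlinarith [abs_nonneg a, sq_abs a]
    have hbnd2 : (ε * b) ^ 4 ≤ ε ^ 4 * Mp ^ 4 := by
      have := hMp x hx
      rw [Real.norm_eq_abs] at this
      have h1 : (ε * b) ^ 4 = |ε| ^ 4 * |b| ^ 4 := by
        rw [← abs_pow, ← abs_pow, ← abs_mul, abs_of_nonneg (by positivity)]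
        ring
      rw [h1]
      have h2 : |b| ^ 4 ≤ Mp ^ 4 := pow_le_pow_left₀ (abs_nonneg b) this 4
      have h3 : |ε| ^ 4 = ε ^ 4 := by rw [← abs_pow, abs_of_nonneg (by positivity)]
      rw [h3]
      exact mul_le_mul_of_nonneg_left h2 (by positivity)
    calc qq a * (ε * b) ^ 4 ≤ Real.sqrt (1 + Ms ^ 2) * (ε ^ 4 * Mp ^ 4) := by
          apply mul_le_mul hbnd1 hbnd2 (by positivity) (Real.sqrt_nonneg _)
      _ = C * ε ^ 4 := by rw [hC]; ring
  -- continuity / integrability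
  have hxic : ContinuousOn ξ (Icc 0 L) := by
    refine ContinuousOn.congr (f := fun x => Real.sqrt (1 + s' x ^ 2))
      (((continuousOn_const (c := (1:ℝ))).add (hs'c.pow 2)).sqrt) ?_
    intro x _; exact hξ x
  have hxine : ∀ x ∈ Icc (0:ℝ) L, ξ x ≠ 0 := fun x _ => (hxipos x).ne'
  have hcont1 : ∀ ε : ℝ, ContinuousOn
      (fun x => ξ x * (Real.sqrt (1 + (s' x - ε * p' x) ^ 2) - ξ x)) (Icc 0 L) := by
    intro ε
    apply hxic.mul
    apply ContinuousOn.sub _ hxic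
    exact (continuousOn_const.add ((hs'c.sub (continuousOn_const.mul hp'c)).pow 2)).sqrt
  have hcont2 : ∀ ε : ℝ, ContinuousOn
      (fun x => -(ε * s' x * p' x) + ε ^ 2 * p' x ^ 2 / (2 * ξ x ^ 2)
        + ε ^ 3 * s' x * p' x ^ 3 / (2 * ξ x ^ 4)) (Icc 0 L) := by
    intro ε
    apply ContinuousOn.add
    apply ContinuousOn.add
    · exact ((continuousOn_const.mul hs'c).mul hp'c).neg
    · exact (continuousOn_const.mul (hp'c.pow 2)).div
        (continuousOn_const.mul (hxic.pow 2))
        (fun x hx => by simpa using pow_ne_zero 2 (hxine x hx))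
    · exact ((continuousOn_const.mul hs'c).mul (hp'c.pow 3)).div
        (continuousOn_const.mul (hxic.pow 4))
        (fun x hx => by simpa using pow_ne_zero 4 (hxine x hx))
  have hIcc : uIcc (0:ℝ) L = Icc 0 L := uIcc_of_le hL.le
  have hint1 : ∀ ε : ℝ, IntervalIntegrable
      (fun x => ξ x * (Real.sqrt (1 + (s' x - ε * p' x) ^ 2) - ξ x)) MeasureTheory.volume 0 L :=
    fun ε => ((hcont1 ε).mono (by rw [hIcc])).intervalIntegrable
  have hint2 : ∀ ε : ℝ, IntervalIntegrable
      (fun x => -(ε * s' x * p' x) + ε ^ 2 * p' x ^ 2 / (2 * ξ x ^ 2)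
        + ε ^ 3 * s' x * p' x ^ 3 / (2 * ξ x ^ 4)) MeasureTheory.volume 0 L :=
    fun ε => ((hcont2 ε).mono (by rw [hIcc])).intervalIntegrable
  -- IsBigO with ε^4
  have hBigO : (fun ε : ℝ =>
        H₀ * (∫ x in (0 : ℝ)..L, ξ x * (Real.sqrt (1 + (s' x - ε * p' x) ^ 2) - ξ x))
          - H₀ * (∫ x in (0 : ℝ)..L,
              (-(ε * s' x * p' x) + ε ^ 2 * p' x ^ 2 / (2 * ξ x ^ 2)
                + ε ^ 3 * s' x * p' x ^ 3 / (2 * ξ x ^ 4))))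
      =O[nhds 0] (fun ε : ℝ => ε ^ 4) := by
    apply IsBigO.of_bound (|H₀| * (C * L))
    apply Filter.Eventually.of_forall
    intro ε
    have heq : H₀ * (∫ x in (0 : ℝ)..L, ξ x * (Real.sqrt (1 + (s' x - ε * p' x) ^ 2) - ξ x))
        - H₀ * (∫ x in (0 : ℝ)..L,
            (-(ε * s' x * p' x) + ε ^ 2 * p' x ^ 2 / (2 * ξ x ^ 2)
              + ε ^ 3 * s' x * p' x ^ 3 / (2 * ξ x ^ 4)))
        = H₀ * (∫ x in (0 : ℝ)..L,
            (ξ x * (Real.sqrt (1 + (s' x - ε * p' x) ^ 2) - ξ x)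
              - (-(ε * s' x * p' x) + ε ^ 2 * p' x ^ 2 / (2 * ξ x ^ 2)
                + ε ^ 3 * s' x * p' x ^ 3 / (2 * ξ x ^ 4)))) := by
      rw [intervalIntegral.integral_sub (hint1 ε) (hint2 ε), mul_sub]
    rw [heq, norm_mul]
    have hbound : ‖∫ x in (0 : ℝ)..L,
        (ξ x * (Real.sqrt (1 + (s' x - ε * p' x) ^ 2) - ξ x)
          - (-(ε * s' x * p' x) + ε ^ 2 * p' x ^ 2 / (2 * ξ x ^ 2)
            + ε ^ 3 * s' x * p' x ^ 3 / (2 * ξ x ^ 4)))‖ ≤ (C * ε ^ 4) * |L - 0| := by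
      apply intervalIntegral.norm_integral_le_of_norm_le_const
      intro x hx
      rw [uIoc_of_le hL.le] at hx
      rw [Real.norm_eq_abs]
      exact hptwise ε x (Ioc_subset_Icc_self hx)
    calc ‖H₀‖ * ‖_‖ ≤ ‖H₀‖ * ((C * ε ^ 4) * |L - 0|) :=
          mul_le_mul_of_nonneg_left hbound (norm_nonneg _)
      _ = |H₀| * (C * L) * ‖ε ^ 4‖ := by
          rw [Real.norm_eq_abs, Real.norm_eq_abs, abs_of_pos (by linarith : (0:ℝ) < L - 0),
            abs_of_nonneg (by positivity : (0:ℝ) ≤ ε ^ 4)]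
          ring
  refine hBigO.trans_isLittleO ?_
  rw [isLittleO_iff]
  intro c hc
  filter_upwards [Metric.ball_mem_nhds (0:ℝ) hc] with ε hε
  rw [Metric.mem_ball, Real.dist_eq, sub_zero] at hε
  rw [Real.norm_eq_abs, Real.norm_eq_abs]
  calc |ε ^ 4| = |ε| * |ε ^ 3| := by rw [← abs_mul]; ring_nf
    _ ≤ c * |ε ^ 3| := mul_le_mul_of_nonneg_right hε.le (abs_nonneg _)
end
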